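/- arXiv:1607.04868 — 12 statements merged into one kernel-verified Lean document; each statement's English description precedes it below -/
import Mathlib

section
/- Let M be a finite matroid on ground set E. For every subset X of E, X is a union of cocircuits of M (possibly the empty union) if and only if for every circuit C of M the intersection X ∩ C does not have exactly one element. -/
/-- A circuit of a matroid is a minimal dependent set. -/
def Matroid.IsCircuit' {α : Type*} (M : Matroid α) (C : Set α) : Prop :=
  Minimal M.Dep C

open Set

namespace Matroid

variable {α : Type*} {M : Matroid α} {C K : Set α} {e : α}

/-- Every dependent set in a finite matroid contains a circuit. -/
lemma exists_circuit'_subset (hM : M.Finite) {D : Set α} (hD : M.Dep D) :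
    ∃ C ⊆ D, M.IsCircuit' C := by
  have hfin : {D' : Set α | D' ⊆ D ∧ M.Dep D'}.Finite :=
    (hM.ground_finite.subset hD.subset_ground).finite_subsets.subset fun x hx => hx.1
  obtain ⟨C, hC⟩ := hfin.exists_minimal ⟨D, Subset.rfl, hD⟩
  exact ⟨C, hC.prop.1, hC.prop.2, fun D' hD' hsub => hC.2 ⟨hsub.trans hC.prop.1, hD'⟩ hsub⟩

lemma IsCircuit'.diff_singleton_indep (hC : M.IsCircuit' C) (he : e ∈ C) :
    M.Indep (C \ {e}) := by
  by_contra hind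
  have hdep : M.Dep (C \ {e}) := ⟨hind, diff_subset.trans hC.prop.subset_ground⟩
  exact (hC.2 hdep diff_subset he).2 rfl

lemma IsCircuit'.mem_closure_diff_singleton (hC : M.IsCircuit' C) (he : e ∈ C) :
    e ∈ M.closure (C \ {e}) := by
  have h := (hC.diff_singleton_indep he).insert_dep_iff (e := e)
  rw [insert_diff_singleton, insert_eq_of_mem he] at h
  exact (h.mp hC.prop).1

/-- Circuit–cocircuit orthogonality. -/
lemma circuit'_inter_cocircuit'_ne_one (hC : M.IsCircuit' C) (hK : M✶.IsCircuit' K) :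
    (C ∩ K).encard ≠ 1 := by
  intro h1
  obtain ⟨e, he⟩ := Set.encard_eq_one.mp h1
  have hmem : e ∈ C ∩ K := by rw [he]; exact rfl
  have heC : e ∈ C := hmem.1
  have heK : e ∈ K := hmem.2
  have hKE : K ⊆ M.E := by simpa using hK.prop.subset_ground
  have hsub : C \ {e} ⊆ M.E \ K := by
    rintro x ⟨hxC, hxe⟩
    refine ⟨hC.prop.subset_ground hxC, fun hxK => hxe ?_⟩
    rw [← he]; exact ⟨hxC, hxK⟩
  have hecl : e ∈ M.closure (M.E \ K) :=
    M.closure_subset_closure hsub (hC.mem_closure_diff_singleton heC)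
  have hKe : M✶.Indep (K \ {e}) := by
    by_contra hind
    have hdep : M✶.Dep (K \ {e}) := ⟨hind, diff_subset.trans hK.prop.subset_ground⟩
    exact (hK.2 hdep diff_subset heK).2 rfl
  have hsp : M.Spanning (M.E \ (K \ {e})) := Coindep.compl_spanning hKe
  have hset : M.E \ (K \ {e}) = insert e (M.E \ K) := by
    ext x
    simp only [mem_diff, mem_singleton_iff, mem_insert_iff, not_and, not_not]
    constructor
    · rintro ⟨hxE, hx⟩
      by_cases hxK : x ∈ K
      · exact Or.inl (hx hxK)
      · exact Or.inr ⟨hxE, hxK⟩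
    · rintro (rfl | ⟨hxE, hxK⟩)
      · exact ⟨hKE heK, fun _ => rfl⟩
      · exact ⟨hxE, fun hh => absurd hh hxK⟩
  rw [hset] at hsp
  have hclins : M.closure (insert e (M.E \ K)) = M.closure (M.E \ K) := by
    rw [← closure_insert_closure_eq_closure_insert, insert_eq_of_mem hecl, closure_closure]
  have hsp2 : M.Spanning (M.E \ K) := by
    rw [spanning_iff_closure_eq (insert_subset (hKE heK) diff_subset)] at hsp
    rw [spanning_iff_closure_eq diff_subset, ← hclins]
    exact hsp
  exact hK.prop.not_indep ((coindep_iff_compl_spanning hKE).mpr hsp2)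

end Matroid

open Set Matroid in
/-- For a finite matroid `M` and `X ⊆ M.E`, `X` is a union of cocircuits
(circuits of the dual matroid) iff `X` meets no circuit of `M` in exactly
one element. -/
theorem union_of_cocircuits_iff_no_circuit_meets_in_one {α : Type*}
    (M : Matroid α) (hM : M.Finite) (X : Set α) (hX : X ⊆ M.E) :
    (∃ 𝒞 : Set (Set α), (∀ C ∈ 𝒞, M✶.IsCircuit' C) ∧ X = ⋃₀ 𝒞) ↔
      ∀ C : Set α, M.IsCircuit' C → (X ∩ C).encard ≠ 1 := by
  constructor
  · rintro ⟨𝒞, h𝒞, rfl⟩ C hC h1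
    obtain ⟨e, he⟩ := Set.encard_eq_one.mp h1
    have hmem : e ∈ (⋃₀ 𝒞) ∩ C := by rw [he]; exact rfl
    obtain ⟨K, hK𝒞, heK⟩ := hmem.1
    have hKC : C ∩ K = {e} := by
      apply subset_antisymm
      · intro x hx
        have hx' : x ∈ (⋃₀ 𝒞) ∩ C := ⟨⟨K, hK𝒞, hx.2⟩, hx.1⟩
        rw [he] at hx'; exact hx'
      · exact singleton_subset_iff.mpr ⟨hmem.2, heK⟩
    exact circuit'_inter_cocircuit'_ne_one hC (h𝒞 K hK𝒞) (by rw [hKC, encard_singleton])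
  · intro h
    refine ⟨{K | M✶.IsCircuit' K ∧ K ⊆ X}, fun K hK => hK.1, ?_⟩
    apply subset_antisymm
    · intro e heX
      obtain ⟨I, hI⟩ := M.exists_isBasis (M.E \ X) diff_subset
      have heI : e ∉ I := fun h' => (hI.subset h').2 heX
      have heE : e ∈ M.E := hX heX
      -- e is not in the closure of M.E \ X
      have hecl : e ∉ M.closure (M.E \ X) := by
        intro hecl
        rw [← hI.closure_eq_closure] at hecl
        have hdep : M.Dep (insert e I) := hI.indep.insert_dep_iff.mpr ⟨hecl, heI⟩
        obtain ⟨C, hCsub, hC⟩ := exists_circuit'_subset hM hdep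
        have heC : e ∈ C := by
          by_contra heC
          exact hC.prop.not_indep (hI.indep.subset fun x hx =>
            (hCsub hx).resolve_left (fun hh => heC (hh ▸ hx)))
        apply h C hC
        have hXC : X ∩ C = {e} := by
          apply subset_antisymm
          · rintro x ⟨hxX, hxC⟩
            rcases hCsub hxC with hh | hxI
            · exact hh
            · exact absurd hxX (hI.subset hxI).2
          · exact singleton_subset_iff.mpr ⟨heX, heC⟩
        rw [hXC, encard_singleton]
      -- extend a basis of M.E \ X together with e to a base B
      have hins : M.Indep (insert e I) := by
        rw [hI.indep.insert_indep_iff_of_notMem heI]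
        refine ⟨heE, fun hc => hecl ?_⟩
        rwa [hI.closure_eq_closure] at hc
      obtain ⟨B, hB, hIB⟩ := hins.exists_isBase_superset
      have heB : e ∈ B := hIB (mem_insert _ _)
      set H := M.closure (B \ {e}) with hH
      have heH : e ∉ H := hB.indep.notMem_closure_diff_of_mem heB
      have hHE : H ⊆ M.E := M.closure_subset_ground _
      have hIBe : I ⊆ B \ {e} :=
        fun x hx => ⟨hIB (mem_insert_of_mem _ hx), fun hxe => heI (hxe ▸ hx)⟩
      have hSH : M.E \ X ⊆ H := by
        have h1 : M.closure (M.E \ X) ⊆ H := by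
          rw [← hI.closure_eq_closure]; exact M.closure_subset_closure hIBe
        exact (M.subset_closure _ diff_subset).trans h1
      have hKX : M.E \ H ⊆ X := fun x hx => by
        by_contra hxX
        exact hx.2 (hSH ⟨hx.1, hxX⟩)
      -- every single-element extension of H is spanning
      have hspan : ∀ f ∈ M.E \ H, M.closure (insert f H) = M.E := by
        rintro f ⟨hfE, hfH⟩
        rw [hH, closure_insert_closure_eq_closure_insert]
        by_cases hfe : f = e
        · subst hfe
          rw [insert_diff_singleton, insert_eq_of_mem heB, hB.closure_eq]
        · have hfB : f ∉ B := fun hfB =>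
            hfH (M.subset_closure (B \ {e}) (diff_subset.trans hB.subset_ground) ⟨hfB, hfe⟩)
          have hfBe : f ∉ B \ {e} := fun hh => hfB hh.1
          have hind : M.Indep (insert f (B \ {e})) := by
            rw [(hB.indep.subset diff_subset).insert_indep_iff_of_notMem hfBe]
            exact ⟨hfE, hfH⟩
          rw [(hB.exchange_isBase_of_indep hfB hind).closure_eq]
      -- M.E \ H is dependent in the dual
      have hdep : M✶.Dep (M.E \ H) := by
        rw [dep_iff]
        refine ⟨fun hind => ?_, by rw [dual_ground]; exact diff_subset⟩
        have hsp : M.Spanning (M.E \ (M.E \ H)) := Coindep.compl_spanning hind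
        rw [diff_diff_cancel_left hHE] at hsp
        rw [spanning_iff_closure_eq hHE, hH, closure_closure, ← hH] at hsp
        exact heH (hsp.symm ▸ heE)
      -- M.E \ H is a cocircuit
      have hcirc : M✶.IsCircuit' (M.E \ H) := by
        refine ⟨hdep, fun D hD hDsub => ?_⟩
        by_contra hKD
        obtain ⟨f, hfK, hfD⟩ := not_subset.mp hKD
        apply hD.not_indep
        have hDE : D ⊆ M.E := by
          have := hD.subset_ground; rwa [dual_ground] at this
        show M✶.Indep D
        rw [show M✶.Indep D ↔ M.Coindep D from Iff.rfl, coindep_iff_compl_spanning hDE]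
        have hfH : insert f H ⊆ M.E \ D :=
          insert_subset ⟨hfK.1, hfD⟩ fun x hx => ⟨hHE hx, fun hxD => (hDsub hxD).2 hx⟩
        refine Spanning.superset ?_ hfH diff_subset
        rw [spanning_iff_closure_eq (insert_subset hfK.1 hHE)]
        exact hspan f hfK
      exact ⟨M.E \ H, ⟨hcirc, hKX⟩, ⟨heE, heH⟩⟩
    · exact sUnion_subset fun K hK => hK.2
end

section
/- Let K be a field and E a finite set, and let W be a linear subspace of the space K^E of functions E → K. Then W is spanned by the set of its nonzero elements of minimal support, i.e., by { w ∈ W : w ≠ 0 and there is no nonzero v ∈ W with support(v) strictly contained in support(w) }. -/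
/-- A linear subspace `W` of `K^E` (for `K` a field and `E` finite) is spanned by
its nonzero elements of minimal support. -/
theorem span_minimal_support_eq {K E : Type*} [Field K] [Fintype E]
    (W : Submodule K (E → K)) :
    Submodule.span K {w : E → K | w ∈ W ∧ w ≠ 0 ∧
      ¬∃ v : E → K, v ∈ W ∧ v ≠ 0 ∧ Function.support v ⊂ Function.support w} = W := by
  classical
  set S := {w : E → K | w ∈ W ∧ w ≠ 0 ∧
      ¬∃ v : E → K, v ∈ W ∧ v ≠ 0 ∧ Function.support v ⊂ Function.support w} with hS
  apply le_antisymm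
  · rw [Submodule.span_le]
    exact fun w hw => hw.1
  · intro w hw
    have key : ∀ n : ℕ, ∀ w ∈ W, (Function.support w).ncard ≤ n →
        w ∈ Submodule.span K S := by
      intro n
      induction n with
      | zero =>
        intro w hw h0
        have hfin : (Function.support w).Finite := Set.toFinite _
        have hempty : Function.support w = ∅ :=
          (Set.ncard_eq_zero hfin).mp (Nat.le_zero.mp h0)
        have : w = 0 := Function.support_eq_empty_iff.mp hempty
        simp [this]
      | succ n ih =>
        intro w hw hcard
        by_cases hw0 : w = 0
        · simp [hw0]
        by_cases hmin : ∃ v : E → K, v ∈ W ∧ v ≠ 0 ∧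
            Function.support v ⊂ Function.support w
        · obtain ⟨v, hvW, hv0, hvs⟩ := hmin
          obtain ⟨e, he⟩ := Function.support_nonempty_iff.mpr hv0
          have hve : v e ≠ 0 := he
          have hew : e ∈ Function.support w := hvs.subset he
          set c := w e / v e with hc
          have hw' : w - c • v ∈ W := W.sub_mem hw (W.smul_mem _ hvW)
          have hsupp : Function.support (w - c • v) ⊆ Function.support w \ {e} := by
            intro x hx
            constructor
            · by_contra hxw
              have hwx : w x = 0 := Function.notMem_support.mp hxw
              have hvx : v x = 0 := Function.notMem_support.mp
                (fun hxv => hxw (hvs.subset hxv))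
              apply hx
              simp [hwx, hvx]
            · intro hxe
              have hxe' : x = e := hxe
              apply hx
              subst hxe'
              simp only [Pi.sub_apply, Pi.smul_apply, smul_eq_mul, hc]
              field_simp
              simp
          have hlt : (Function.support w \ ({e} : Set E)).ncard <
              (Function.support w).ncard :=
            Set.ncard_diff_singleton_lt_of_mem hew (Set.toFinite _)
          have h1 : (Function.support (w - c • v)).ncard ≤ n := by
            have := lt_of_le_of_lt (Set.ncard_le_ncard hsupp (Set.toFinite _)) hlt
            omega
          have h2 : (Function.support v).ncard ≤ n := by
            have := Set.ncard_lt_ncard hvs (Set.toFinite _)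
            omega
          have hw'span := ih _ hw' h1
          have hvspan := ih _ hvW h2
          have : w = (w - c • v) + c • v := by abel
          rw [this]
          exact Submodule.add_mem _ hw'span (Submodule.smul_mem _ _ hvspan)
        · exact Submodule.subset_span ⟨hw, hw0, hmin⟩
    exact key _ w hw le_rfl
end

section
/- Let K be a field, E a finite set, and V a linear subspace of K^E. Let V^⊥ = { y ∈ K^E : Σ_{e∈E} v(e)·y(e) = 0 for all v ∈ V }. Then for x ∈ K^E, x belongs to V if and only if Σ_{e∈E} x(e)·y(e) = 0 for every nonzero y ∈ V^⊥ whose support is minimal among the supports of nonzero elements of V^⊥. -/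
open Finset

section aux

variable {K E : Type*} [Field K] [Fintype E]

/-- The standard bilinear form on `E → K`. -/
noncomputable def stdBilin (K E : Type*) [Field K] [Fintype E] :
    LinearMap.BilinForm K (E → K) :=
  LinearMap.mk₂ K (fun x y => ∑ e, x e * y e)
    (fun x y z => by simp [add_mul, Finset.sum_add_distrib])
    (fun c x y => by simp [Finset.mul_sum, mul_assoc])
    (fun x y z => by simp [mul_add, Finset.sum_add_distrib])
    (fun c x y => by simp [Finset.mul_sum]; exact Finset.sum_congr rfl fun a _ => by ring)

@[simp] lemma stdBilin_apply (x y : E → K) : stdBilin K E x y = ∑ e, x e * y e := rfl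

lemma stdBilin_nondegenerate : (stdBilin K E).Nondegenerate := by
  classical
  have hr : (stdBilin K E).IsRefl := by
    intro x y h
    simp only [stdBilin_apply] at h ⊢
    rw [← h]
    exact Finset.sum_congr rfl fun e _ => mul_comm _ _
  refine LinearMap.IsRefl.nondegenerate_iff_separatingLeft hr |>.mpr ?_
  intro x hx
  funext e
  have := hx (Pi.single e 1)
  simp only [stdBilin_apply] at this
  rwa [Finset.sum_eq_single e (fun b _ hb => by simp [Pi.single_eq_of_ne hb])
    (by simp), Pi.single_eq_same, mul_one] at this

lemma stdBilin_isRefl : (stdBilin K E).IsRefl := by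
  intro x y h
  simp only [stdBilin_apply] at h ⊢
  rw [← h]
  exact Finset.sum_congr rfl fun e _ => mul_comm _ _

end aux

/-- For a field `K`, a finite set `E`, and a subspace `V` of `K^E`:
`x ∈ V` iff `x` is orthogonal (w.r.t. the standard bilinear form) to every
nonzero element of `V^⊥` whose support is minimal among supports of nonzero
elements of `V^⊥`. -/
theorem mem_iff_orthogonal_minimal_support {K E : Type*} [Field K] [Fintype E]
    (V : Submodule K (E → K)) (x : E → K) :
    x ∈ V ↔
      ∀ y : E → K, (∀ v ∈ V, ∑ e, v e * y e = 0) → y ≠ 0 →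
        (¬∃ z : E → K, (∀ v ∈ V, ∑ e, v e * z e = 0) ∧ z ≠ 0 ∧
          Function.support z ⊂ Function.support y) →
        ∑ e, x e * y e = 0 := by
  classical
  constructor
  · intro hx y hy _ _
    exact hy x hx
  · intro h
    -- the predicate "y ∈ V⊥"
    set P : (E → K) → Prop := fun y => ∀ v ∈ V, ∑ e, v e * y e = 0 with hP
    -- main claim: x is orthogonal to every element of V⊥
    have key : ∀ n : ℕ, ∀ y : E → K, P y → (Function.support y).toFinset.card ≤ n →
        ∑ e, x e * y e = 0 := by
      intro n
      induction n with
      | zero =>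
        intro y hy hcard
        have : y = 0 := by
          funext e
          by_contra he
          have : e ∈ (Function.support y).toFinset := by simpa using he
          have := Finset.card_pos.mpr ⟨e, this⟩
          omega
        simp [this]
      | succ n ih =>
        intro y hy hcard
        by_cases hy0 : y = 0
        · simp [hy0]
        by_cases hmin : ∃ z : E → K, (∀ v ∈ V, ∑ e, v e * z e = 0) ∧ z ≠ 0 ∧
            Function.support z ⊂ Function.support y
        · obtain ⟨z, hzP, hz0, hzsub⟩ := hmin
          -- pick e in support of z
          obtain ⟨e, he⟩ : ∃ e, z e ≠ 0 := by
            by_contra hc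
            push_neg at hc
            exact hz0 (funext hc)
          have hey : y e ≠ 0 := hzsub.1 he
          set c : K := y e / z e with hc
          set y' : E → K := fun a => y a - c * z a with hy'
          have hy'P : P y' := by
            intro v hv
            have h1 := hy v hv
            have h2 := hzP v hv
            simp only [hy', mul_sub, Finset.sum_sub_distrib]
            have : ∑ a, v a * (c * z a) = c * ∑ a, v a * z a := by
              rw [Finset.mul_sum]; exact Finset.sum_congr rfl fun a _ => by ring
            rw [h1, this, h2, mul_zero, sub_zero]
          have hy'e : y' e = 0 := by
            simp only [hy', hc]
            field_simp
            simp
          have hsub' : Function.support y' ⊆ Function.support y := by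
            intro a ha
            simp only [hy', Function.mem_support] at ha ⊢
            intro hya
            apply ha
            rcases Classical.em (z a = 0) with h | h
            · simp [hya, h]
            · exact absurd (hzsub.1 (by simpa using h)) (by simpa using hya)
          have hcard' : (Function.support y').toFinset.card < (Function.support y).toFinset.card := by
            apply Finset.card_lt_card
            constructor
            · intro a ha; simp only [Set.mem_toFinset] at ha ⊢; exact hsub' ha
            · intro hcon
              have : e ∈ (Function.support y').toFinset := hcon (by simpa using hey)
              simp only [Set.mem_toFinset, Function.mem_support] at this
              exact this hy'e
          have hcardz : (Function.support z).toFinset.card < (Function.support y).toFinset.card := by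
            apply Finset.card_lt_card
            rw [Finset.ssubset_iff_of_subset (fun a ha => by
              simp only [Set.mem_toFinset] at ha ⊢; exact hzsub.1 ha)]
            obtain ⟨b, hb1, hb2⟩ := Set.exists_of_ssubset hzsub
            exact ⟨b, by simpa using hb1, by simpa using hb2⟩
          have ih1 : ∑ a, x a * y' a = 0 := ih y' hy'P (by omega)
          have ih2 : ∑ a, x a * z a = 0 := ih z hzP (by omega)
          have expand : ∑ a, x a * y a = (∑ a, x a * y' a) + c * ∑ a, x a * z a := by
            rw [Finset.mul_sum, ← Finset.sum_add_distrib]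
            exact Finset.sum_congr rfl fun a _ => by simp [hy']; ring
          rw [expand, ih1, ih2, mul_zero, add_zero]
        · exact h y hy hy0 hmin
    have key' : ∀ y : E → K, P y → ∑ e, x e * y e = 0 := fun y hy =>
      key (Function.support y).toFinset.card y hy le_rfl
    -- now use double orthogonality
    have hV : (stdBilin K E).orthogonal ((stdBilin K E).orthogonal V) = V :=
      LinearMap.BilinForm.orthogonal_orthogonal stdBilin_nondegenerate stdBilin_isRefl V
    rw [← hV]
    intro y hy
    have hyP : P y := by
      intro v hv
      have := hy v hv
      simpa [LinearMap.BilinForm.IsOrtho] using this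
    have := key' y hyP
    simpa [LinearMap.BilinForm.IsOrtho] using stdBilin_isRefl x y (by simpa using this)
end

section
/- Let K be a finite field and let a_1, …, a_n be an enumeration (without repetition) of the nonzero elements of K. Index coordinates by the set E = {p, q} ⊔ {1,…,n} and define u, w ∈ K^E by u(p) = 1, u(q) = 0, u(j) = 1 for all j ∈ {1,…,n}, and w(p) = 0, w(q) = 1, w(j) = a_j for all j ∈ {1,…,n}. Then every vector in the linear span of {u, w} has at least one zero coordinate. -/
/-- Let `K` be a finite field and `a : Fin n → K` an enumeration without
repetition of the nonzero elements of `K`. With coordinates indexed by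
`Fin 2 ⊕ Fin n`, let `u = (1, 0, 1, …, 1)` and `w = (0, 1, a 0, …, a (n-1))`.
Then every vector in the span of `{u, w}` has a zero coordinate. -/
theorem span_two_rows_has_zero_coord {K : Type*} [Field K] [Fintype K]
    (n : ℕ) (a : Fin n → K)
    (ha_inj : Function.Injective a)
    (ha_ne : ∀ j, a j ≠ 0)
    (ha_surj : ∀ x : K, x ≠ 0 → ∃ j, a j = x)
    (u w : (Fin 2 ⊕ Fin n) → K)
    (hu : u = Sum.elim ![1, 0] (fun _ => 1))
    (hw : w = Sum.elim ![0, 1] a) :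
    ∀ x ∈ Submodule.span K ({u, w} : Set ((Fin 2 ⊕ Fin n) → K)),
      ∃ e : Fin 2 ⊕ Fin n, x e = 0 := by
  intro x hx
  rw [Submodule.mem_span_pair] at hx
  obtain ⟨c, d, rfl⟩ := hx
  subst hu hw
  by_cases hc : c = 0
  · exact ⟨Sum.inl 0, by simp [hc]⟩
  by_cases hd : d = 0
  · exact ⟨Sum.inl 1, by simp [hd]⟩
  obtain ⟨j, hj⟩ := ha_surj (-c / d) (by
    simp [div_eq_zero_iff, hc, hd])
  refine ⟨Sum.inr j, ?_⟩
  simp only [Pi.add_apply, Pi.smul_apply, Sum.elim_inr, smul_eq_mul, hj]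
  field_simp
  ring
end

section
/- Let F be a commutative hyperfield satisfying 1 ⊞ (−1) = F. Let k ≥ 1 and a_1, …, a_k ∈ F with a_1 ≠ 0. If 0 belongs to the iterated hypersum a_1 ⊞ ⋯ ⊞ a_k, then the iterated hypersum a_1 ⊞ ⋯ ⊞ a_k equals all of F. -/
/-- A commutative hyperfield: a set with multivalued addition and ordinary
multiplication making the nonzero elements a commutative group. -/
structure CommHyperfield (F : Type*) where
  add : F → F → Set F
  mul : F → F → F
  zero : F
  one : F
  neg : F → F
  zero_ne_one : zero ≠ one
  add_nonempty : ∀ x y, (add x y).Nonempty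
  add_comm : ∀ x y, add x y = add y x
  add_assoc : ∀ x y z, (⋃ w ∈ add x y, add w z) = ⋃ w ∈ add y z, add x w
  zero_add : ∀ x, add zero x = {x}
  neg_mem : ∀ x, zero ∈ add x (neg x)
  neg_unique : ∀ x y, zero ∈ add x y → y = neg x
  reversible : ∀ x y z, x ∈ add y z ↔ z ∈ add x (neg y)
  mul_comm : ∀ x y, mul x y = mul y x
  mul_assoc : ∀ x y z, mul (mul x y) z = mul x (mul y z)
  one_mul : ∀ x, mul one x = x
  exists_inv : ∀ x, x ≠ zero → ∃ y, mul x y = one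
  zero_mul : ∀ x, mul zero x = zero
  distrib : ∀ a x y, (mul a) '' (add x y) = add (mul a x) (mul a y)

/-- The iterated hypersum of a list: the empty hypersum is `{0}`, and
`a₁ ⊞ ⋯ ⊞ a_{m+1} = ⋃_{x ∈ a₁ ⊞ ⋯ ⊞ a_m} x ⊞ a_{m+1}`. -/
def CommHyperfield.hyperSum {F : Type*} (H : CommHyperfield F) (l : List F) : Set F :=
  l.foldl (fun S a => ⋃ x ∈ S, H.add x a) {H.zero}

namespace CommHyperfield

variable {F : Type*} (H : CommHyperfield F)

/-- Lift the hyperaddition to sets. -/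
def setAdd (S : Set F) (b : F) : Set F := ⋃ x ∈ S, H.add x b

lemma setAdd_swap (S : Set F) (b c : F) :
    H.setAdd (H.setAdd S b) c = H.setAdd (H.setAdd S c) b := by
  have key : ∀ x, (⋃ w ∈ H.add x b, H.add w c) = ⋃ w ∈ H.add x c, H.add w b := by
    intro x
    rw [H.add_assoc x b c, H.add_assoc x c b, H.add_comm b c]
  ext z
  simp only [setAdd, Set.mem_iUnion]
  constructor
  · rintro ⟨y, ⟨x, hx, hy⟩, hz⟩
    have : z ∈ ⋃ w ∈ H.add x b, H.add w c := Set.mem_biUnion hy hz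
    rw [key x] at this
    obtain ⟨w, hw, hz'⟩ := Set.mem_iUnion₂.1 this
    exact ⟨w, ⟨x, hx, hw⟩, hz'⟩
  · rintro ⟨y, ⟨x, hx, hy⟩, hz⟩
    have : z ∈ ⋃ w ∈ H.add x c, H.add w b := Set.mem_biUnion hy hz
    rw [← key x] at this
    obtain ⟨w, hw, hz'⟩ := Set.mem_iUnion₂.1 this
    exact ⟨w, ⟨x, hx, hw⟩, hz'⟩

lemma foldl_setAdd (l : List F) (S : Set F) (b : F) :
    l.foldl H.setAdd (H.setAdd S b) = H.setAdd (l.foldl H.setAdd S) b := by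
  induction l generalizing S with
  | nil => rfl
  | cons c l ih =>
    simp only [List.foldl_cons]
    rw [H.setAdd_swap S b c, ih]

lemma hyperSum_cons (b : F) (l : List F) :
    H.hyperSum (b :: l) = H.setAdd (H.hyperSum l) b := by
  show l.foldl H.setAdd (H.setAdd {H.zero} b) = _
  exact H.foldl_setAdd l _ b

lemma mul_zero (x : F) : H.mul x H.zero = H.zero := by
  rw [H.mul_comm, H.zero_mul]

lemma neg_neg (x : F) : H.neg (H.neg x) = x := by
  have := H.neg_mem x
  rw [H.add_comm] at this
  exact (H.neg_unique _ _ this).symm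

lemma mul_neg_one (x : F) : H.mul x (H.neg H.one) = H.neg x := by
  have h0 : H.zero ∈ H.add H.one (H.neg H.one) := H.neg_mem H.one
  have : H.mul x H.zero ∈ (H.mul x) '' (H.add H.one (H.neg H.one)) :=
    Set.mem_image_of_mem _ h0
  rw [H.distrib, H.mul_zero, H.mul_comm x H.one, H.one_mul] at this
  exact H.neg_unique _ _ this

lemma add_neg_self_eq_univ (hinf : H.add H.one (H.neg H.one) = Set.univ)
    (x : F) (hx : x ≠ H.zero) : H.add x (H.neg x) = Set.univ := by
  have h := H.distrib x H.one (H.neg H.one)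
  rw [hinf, H.mul_comm x H.one, H.one_mul, H.mul_neg_one] at h
  rw [← h]
  apply Set.eq_univ_of_forall
  intro z
  obtain ⟨y, hy⟩ := H.exists_inv x hx
  exact ⟨H.mul y z, Set.mem_univ _, by rw [← H.mul_assoc, hy, H.one_mul]⟩

end CommHyperfield

/-- In a commutative hyperfield satisfying `1 ⊞ (-1) = F`, any iterated
hypersum `a₁ ⊞ ⋯ ⊞ a_k` with `a₁ ≠ 0` which contains `0` equals all of `F`. -/
theorem inflation_hyperSum {F : Type*} (H : CommHyperfield F)
    (hinf : H.add H.one (H.neg H.one) = Set.univ)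
    (k : ℕ) (hk : 1 ≤ k) (a : Fin k → F) (ha : a ⟨0, hk⟩ ≠ H.zero)
    (h0 : H.zero ∈ H.hyperSum (List.ofFn a)) :
    H.hyperSum (List.ofFn a) = Set.univ := by
  cases k with
  | zero => omega
  | succ n =>
    rw [List.ofFn_succ] at h0 ⊢
    rw [H.hyperSum_cons] at h0 ⊢
    set T := H.hyperSum (List.ofFn fun i => a i.succ) with hT
    obtain ⟨x, hxT, hx0⟩ := Set.mem_iUnion₂.1 h0
    have hx : a 0 = H.neg x := by
      apply H.neg_unique
      exact H.add_comm x (a 0) ▸ hx0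
    have hxval : x = H.neg (a 0) := by rw [hx, H.neg_neg]
    have ha0 : a 0 ≠ H.zero := ha
    apply Set.eq_univ_of_univ_subset
    rw [← H.add_neg_self_eq_univ hinf (a 0) ha0, H.add_comm]
    intro z hz
    exact Set.mem_biUnion (hxval ▸ hxT) hz
end

section
/- Let k ≥ 1 and let s_1 ≤ s_2 ≤ ⋯ ≤ s_k be nonnegative real numbers. Then 0 belongs to the iterated triangle hypersum s_1 ⊞ ⋯ ⊞ s_k if and only if s_k ≤ s_1 + ⋯ + s_{k−1}. -/
/-- Hyperaddition in the triangle hyperfield `△` on the nonnegative reals: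
`x ⊞ y = {z : |x − y| ≤ z ≤ x + y}`. -/
def triAdd (x y : ℝ) : Set ℝ := {z | |x - y| ≤ z ∧ z ≤ x + y}

/-- The iterated hypersum of a list: the empty hypersum is `{0}`, and
`s₁ ⊞ ⋯ ⊞ s_{m+1} = ⋃_{x ∈ s₁ ⊞ ⋯ ⊞ s_m} x ⊞ s_{m+1}`. -/
def hyperSum (add : ℝ → ℝ → Set ℝ) (l : List ℝ) : Set ℝ :=
  l.foldl (fun S a => ⋃ x ∈ S, add x a) {0}

lemma triStep (a b s : ℝ) (ha : 0 ≤ a) (hab : a ≤ b) (has : a ≤ s) (_hs : 0 ≤ s) :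
    (⋃ x ∈ Set.Icc a b, triAdd x s) = Set.Icc (max 0 (s - b)) (b + s) := by
  ext z
  simp only [Set.mem_iUnion, Set.mem_Icc, triAdd, Set.mem_setOf_eq, exists_prop]
  constructor
  · rintro ⟨x, ⟨hx1, hx2⟩, h1, h2⟩
    have habs := abs_nonneg (x - s)
    have h1a : x - s ≤ |x - s| := le_abs_self _
    have h1b : s - x ≤ |x - s| := by have := neg_abs_le (x - s); linarith
    exact ⟨max_le (by linarith) (by linarith), by linarith⟩
  · rintro ⟨h1, h2⟩
    have h0 : (0:ℝ) ≤ z := le_trans (le_max_left _ _) h1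
    have hsb : s - b ≤ z := le_trans (le_max_right _ _) h1
    have h1a : z - s ≤ |z - s| := le_abs_self _
    have h1b : s - z ≤ |z - s| := by have := neg_abs_le (z - s); linarith
    refine ⟨max a |z - s|, ⟨le_max_left _ _, ?_⟩, ?_, ?_⟩
    · exact max_le hab (abs_le.mpr ⟨by linarith, by linarith⟩)
    · refine abs_le.mpr ⟨?_, ?_⟩
      · have : s - z ≤ max a |z - s| := le_trans h1b (le_max_right _ _)
        linarith
      · refine sub_le_iff_le_add.mpr (max_le (by linarith) ?_)
        have : |z - s| ≤ s + z := abs_le.mpr ⟨by linarith, by linarith⟩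
        linarith
    · have : z - s ≤ max a |z - s| := le_trans h1a (le_max_right _ _)
      linarith

lemma hyperSum_append_singleton (l : List ℝ) (s : ℝ) :
    hyperSum triAdd (l ++ [s]) = ⋃ x ∈ hyperSum triAdd l, triAdd x s := by
  simp [hyperSum, List.foldl_append]

lemma key : ∀ (l : List ℝ) (s : ℝ), (∀ x ∈ l, 0 ≤ x) → 0 ≤ s → (∀ x ∈ l, x ≤ s) →
    l.Pairwise (· ≤ ·) →
    hyperSum triAdd (l ++ [s]) = Set.Icc (max 0 (s - l.sum)) (l.sum + s) := by
  intro l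
  induction l using List.reverseRecOn with
  | nil =>
    intro s _ hs _ _
    rw [hyperSum_append_singleton]
    ext z
    simp only [hyperSum, List.foldl_nil, Set.mem_singleton_iff, Set.mem_iUnion, exists_prop,
      triAdd, Set.mem_setOf_eq, Set.mem_Icc, List.sum_nil]
    constructor
    · rintro ⟨x, rfl, h1, h2⟩
      rw [zero_sub, abs_neg, abs_of_nonneg hs] at h1
      exact ⟨max_le (by linarith) (by linarith), by linarith⟩
    · rintro ⟨h1, h2⟩
      have hz : s - 0 ≤ z := le_trans (le_max_right 0 (s - 0)) h1
      refine ⟨0, rfl, ?_, by linarith⟩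
      rw [zero_sub, abs_neg, abs_of_nonneg hs]
      linarith
  | append_singleton l' t ih =>
    intro s hnn hs hle hsorted
    have hsort' : l'.Pairwise (· ≤ ·) ∧ ∀ x ∈ l', x ≤ t := by
      rw [List.pairwise_append] at hsorted
      exact ⟨hsorted.1, fun x hx => hsorted.2.2 x hx t (by simp)⟩
    have ht0 : 0 ≤ t := hnn t (by simp)
    have hts : t ≤ s := hle t (by simp)
    have hsum' : 0 ≤ l'.sum := List.sum_nonneg fun x hx => hnn x (by simp [hx])
    rw [hyperSum_append_singleton,
      ih t (fun x hx => hnn x (by simp [hx])) ht0 hsort'.2 hsort'.1]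
    rw [triStep _ _ s (le_max_left _ _)
      (max_le (by linarith) (by linarith))
      (max_le (by linarith) (by linarith)) (le_trans ht0 hts)]
    simp [List.sum_append]

/-- For nonnegative reals `s 0 ≤ s 1 ≤ ⋯ ≤ s n`, zero belongs to the iterated
triangle hypersum `s 0 ⊞ ⋯ ⊞ s n` iff the largest term is at most the sum of
the others. -/
theorem triangle_hyperSum_zero_mem_iff (n : ℕ) (s : Fin (n + 1) → ℝ)
    (hnn : ∀ j, 0 ≤ s j) (hmono : Monotone s) :
    0 ∈ hyperSum triAdd (List.ofFn s) ↔
      s (Fin.last n) ≤ ∑ j : Fin n, s (Fin.castSucc j) := by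
  have hofn : List.ofFn s = (List.ofFn fun i : Fin n => s i.castSucc) ++ [s (Fin.last n)] := by
    rw [List.ofFn_succ']
    simp [List.concat_eq_append]
  have h1 : ∀ x ∈ (List.ofFn fun i : Fin n => s i.castSucc), 0 ≤ x := by
    intro x hx
    simp only [List.mem_ofFn] at hx
    obtain ⟨i, rfl⟩ := hx
    exact hnn _
  have h3 : ∀ x ∈ (List.ofFn fun i : Fin n => s i.castSucc), x ≤ s (Fin.last n) := by
    intro x hx
    simp only [List.mem_ofFn] at hx
    obtain ⟨i, rfl⟩ := hx
    exact hmono (Fin.le_last _)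
  have h4 : (List.ofFn fun i : Fin n => s i.castSucc).Pairwise (· ≤ ·) := by
    rw [List.pairwise_ofFn]
    intro i j hij
    exact hmono (Fin.castSucc_le_castSucc_iff.mpr hij.le)
  have hk := key (List.ofFn fun i : Fin n => s i.castSucc) (s (Fin.last n)) h1
    (hnn _) h3 h4
  have hsum : (List.ofFn fun i : Fin n => s i.castSucc).sum
      = ∑ j : Fin n, s (Fin.castSucc j) := by
    simp [List.sum_ofFn]
  rw [hofn, hk, hsum]
  have hS : 0 ≤ ∑ j : Fin n, s (Fin.castSucc j) := Finset.sum_nonneg fun j _ => hnn _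
  simp only [Set.mem_Icc]
  constructor
  · rintro ⟨hh1, _⟩
    have := le_trans (le_max_right 0 _) hh1
    linarith
  · intro h
    exact ⟨max_le le_rfl (by linarith), by linarith [hnn (Fin.last n)]⟩
end

section
/- Let k ≥ 1 and let s_1, …, s_k be real numbers. Then 0 belongs to the iterated tropical-real hypersum s_1 ⊞ ⋯ ⊞ s_k if and only if there exist indices j_1, j_2 (not necessarily distinct) such that s_{j_1} = −s_{j_2} and |s_{j_1}| = max_{1≤j≤k} |s_j|. -/
/-- Hyperaddition in the tropical real hyperfield `𝕋ℝ` on `ℝ`: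
`x ⊞ y = {x}` if `|x| > |y|` or `x = y`, `x ⊞ y = {y}` if `|x| < |y|`, and
`x ⊞ y = {z : |z| ≤ |x|}` if `x = −y`. -/
def trAdd (x y : ℝ) : Set ℝ :=
  if |x| > |y| then {x}
  else if |x| < |y| then {y}
  else if x = y then {x}
  else {z | |z| ≤ |x|}

def Opp (l : List ℝ) : Prop := ∃ a ∈ l, -a ∈ l ∧ ∀ b ∈ l, |b| ≤ |a|

lemma hyperSum_concat (l : List ℝ) (b : ℝ) :
    hyperSum trAdd (l ++ [b]) = ⋃ x ∈ hyperSum trAdd l, trAdd x b := by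
  simp [hyperSum, List.foldl_append]

lemma trAdd_zero_left (b : ℝ) : trAdd 0 b = {b} := by
  unfold trAdd
  rcases eq_or_ne b 0 with rfl | hb
  · simp
  · rw [if_neg (by simp [abs_nonneg]), if_pos (by simpa using abs_pos.mpr hb)]

lemma abs_le_of_mem_trAdd {x y z : ℝ} (h : z ∈ trAdd x y) : |z| ≤ max |x| |y| := by
  unfold trAdd at h
  split_ifs at h <;> simp only [Set.mem_singleton_iff, Set.mem_setOf_eq] at h
  · subst h; exact le_max_left _ _
  · subst h; exact le_max_right _ _
  · subst h; exact le_max_left _ _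
  · exact h.trans (le_max_left _ _)

lemma ball_union {a b : ℝ} (hb : |b| ≤ |a|) :
    ⋃ x ∈ {z : ℝ | |z| ≤ |a|}, trAdd x b = {z | |z| ≤ |a|} := by
  ext z
  simp only [Set.mem_iUnion, Set.mem_setOf_eq, exists_prop]
  constructor
  · rintro ⟨x, hx, hz⟩
    exact (abs_le_of_mem_trAdd hz).trans (max_le hx hb)
  · intro hz
    by_cases h : |b| < |z|
    · refine ⟨z, hz, ?_⟩
      unfold trAdd
      rw [if_pos h]
      rfl
    · push_neg at h
      refine ⟨-b, by simpa using hb, ?_⟩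
      rcases eq_or_ne b 0 with rfl | hb0
      · have : z = 0 := by simpa [abs_nonpos_iff] using h.trans_eq abs_zero
        subst this
        simp [trAdd]
      · unfold trAdd
        rw [if_neg (by simp), if_neg (by simp), if_neg (by
          intro hc
          exact hb0 (by linarith))]
        simpa using h

lemma ball_union_big {a b : ℝ} (hab : |a| < |b|) :
    ⋃ x ∈ {z : ℝ | |z| ≤ |a|}, trAdd x b = {b} := by
  ext z
  simp only [Set.mem_iUnion, Set.mem_setOf_eq, exists_prop, Set.mem_singleton_iff]
  constructor
  · rintro ⟨x, hx, hz⟩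
    unfold trAdd at hz
    split_ifs at hz with h1 h2 h3
    · exact absurd h1 (by push_neg; linarith)
    · simpa using hz
    · exact absurd h3 (by intro h; rw [h] at hx; linarith)
    · exact absurd h2 (by push_neg; push_neg at h1; linarith)
  · rintro rfl
    refine ⟨0, by simpa using abs_nonneg a, ?_⟩
    rw [trAdd_zero_left]
    rfl

lemma key_s10 (l : List ℝ) (hl : l ≠ []) :
    (∃ a ∈ l, -a ∈ l ∧ (∀ c ∈ l, |c| ≤ |a|) ∧ hyperSum trAdd l = {z | |z| ≤ |a|}) ∨
    (¬ Opp l ∧ ∃ a ∈ l, (∀ c ∈ l, |c| ≤ |a|) ∧ hyperSum trAdd l = {a}) := by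
  induction l using List.reverseRecOn with
  | nil => exact absurd rfl hl
  | append_singleton l b ih =>
    have hsb : hyperSum trAdd (l ++ [b]) = ⋃ x ∈ hyperSum trAdd l, trAdd x b :=
      hyperSum_concat l b
    rcases eq_or_ne l [] with rfl | hl'
    · have hone : hyperSum trAdd ([] ++ [b]) = {b} := by
        rw [hsb]
        simp [hyperSum, trAdd_zero_left]
      rcases eq_or_ne b 0 with rfl | hb
      · left
        refine ⟨0, by simp, by simp, by simp, ?_⟩
        rw [hone]
        ext z
        simp [abs_nonpos_iff, eq_comm]
      · right
        refine ⟨?_, b, by simp, by simp, hone⟩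
        rintro ⟨a, ha, hna, -⟩
        simp only [List.nil_append, List.mem_singleton] at ha hna
        subst ha
        exact hb (by linarith [abs_nonneg a, hna])
    · rcases ih hl' with ⟨a, ha, hna, hbd, hsum⟩ | ⟨hnopp, a, ha, hbd, hsum⟩
      · -- ball case
        rcases le_or_gt |b| |a| with hb | hb
        · left
          refine ⟨a, List.mem_append_left _ ha, List.mem_append_left _ hna, ?_, ?_⟩
          · intro c hc
            rcases List.mem_append.mp hc with hc | hc
            · exact hbd c hc
            · rw [List.mem_singleton.mp hc]; exact hb
          · rw [hsb, hsum, ball_union hb]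
        · right
          have hsum' : hyperSum trAdd (l ++ [b]) = {b} := by
            rw [hsb, hsum, ball_union_big hb]
          refine ⟨?_, b, List.mem_append_right _ (by simp), ?_, hsum'⟩
          · rintro ⟨c, hc, hnc, hcb⟩
            have hble : |b| ≤ |c| := hcb b (List.mem_append_right _ (by simp))
            rcases List.mem_append.mp hc with hc | hc
            · have := hbd c hc; linarith
            · rw [List.mem_singleton.mp hc] at hnc
              rcases List.mem_append.mp hnc with h' | h'
              · have := hbd _ h'; rw [abs_neg] at this; linarith
              · have hb0 : b = 0 := by
                  have := List.mem_singleton.mp h'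
                  linarith
                rw [hb0, abs_zero] at hb
                linarith [abs_nonneg a]
          · intro c hc
            rcases List.mem_append.mp hc with hc | hc
            · exact (hbd c hc).trans hb.le
            · rw [List.mem_singleton.mp hc]
      · -- singleton case
        have hsum2 : hyperSum trAdd (l ++ [b]) = trAdd a b := by
          rw [hsb, hsum]; simp
        have hOppRestrict : ∀ c ∈ l, (∀ d ∈ l ++ [b], |d| ≤ |c|) → ∀ d ∈ l, |d| ≤ |c| :=
          fun c _ h d hd => h d (List.mem_append_left _ hd)
        rcases lt_trichotomy |b| |a| with h | h | h
        · right
          have ht : trAdd a b = {a} := by unfold trAdd; rw [if_pos h]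
          refine ⟨?_, a, List.mem_append_left _ ha, ?_, by rw [hsum2, ht]⟩
          · rintro ⟨c, hc, hnc, hcb⟩
            have hale : |a| ≤ |c| := hcb a (List.mem_append_left _ ha)
            rcases List.mem_append.mp hc with hc | hc
            · rcases List.mem_append.mp hnc with h' | h'
              · exact hnopp ⟨c, hc, h', fun d hd => hcb d (List.mem_append_left _ hd)⟩
              · have : |c| = |b| := by
                  rw [← List.mem_singleton.mp h', abs_neg]
                linarith
            · rw [List.mem_singleton.mp hc] at hale
              linarith
          · intro c hc
            rcases List.mem_append.mp hc with hc | hc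
            · exact hbd c hc
            · rw [List.mem_singleton.mp hc]; exact h.le
        · rcases eq_or_ne a b with rfl | hab
          · right
            have ht : trAdd a a = {a} := by
              unfold trAdd
              rw [if_neg (lt_irrefl _), if_neg (lt_irrefl _), if_pos rfl]
            refine ⟨?_, a, List.mem_append_left _ ha, ?_, by rw [hsum2, ht]⟩
            · rintro ⟨c, hc, hnc, hcb⟩
              have hcl : c ∈ l := by
                rcases List.mem_append.mp hc with hc | hc
                · exact hc
                · rw [List.mem_singleton.mp hc]; exact ha
              have hncl : -c ∈ l := by
                rcases List.mem_append.mp hnc with h' | h'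
                · exact h'
                · rw [List.mem_singleton.mp h']; exact ha
              exact hnopp ⟨c, hcl, hncl, fun d hd => hcb d (List.mem_append_left _ hd)⟩
            · intro c hc
              rcases List.mem_append.mp hc with hc | hc
              · exact hbd c hc
              · rw [List.mem_singleton.mp hc]
          · left
            have hba : b = -a := by
              rcases abs_eq_abs.mp h with h' | h'
              · exact absurd h'.symm hab
              · exact h'
            have ht : trAdd a b = {z | |z| ≤ |a|} := by
              unfold trAdd
              rw [if_neg (by rw [h]; exact lt_irrefl _),
                  if_neg (by rw [h]; exact lt_irrefl _), if_neg (Ne.symm hab ∘ Eq.symm)]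
            refine ⟨a, List.mem_append_left _ ha,
              List.mem_append_right _ (by simp [hba]), ?_, by rw [hsum2, ht]⟩
            intro c hc
            rcases List.mem_append.mp hc with hc | hc
            · exact hbd c hc
            · rw [List.mem_singleton.mp hc]; exact h.le
        · right
          have ht : trAdd a b = {b} := by
            unfold trAdd
            rw [if_neg (by push_neg; exact h.le), if_pos h]
          refine ⟨?_, b, List.mem_append_right _ (by simp), ?_, by rw [hsum2, ht]⟩
          · rintro ⟨c, hc, hnc, hcb⟩
            have hble : |b| ≤ |c| := hcb b (List.mem_append_right _ (by simp))
            rcases List.mem_append.mp hc with hc | hc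
            · have := hbd c hc; linarith
            · rw [List.mem_singleton.mp hc] at hnc
              rcases List.mem_append.mp hnc with h' | h'
              · have := hbd _ h'; rw [abs_neg] at this; linarith
              · have hb0 : b = 0 := by
                  have := List.mem_singleton.mp h'
                  linarith
                rw [hb0, abs_zero] at h
                linarith [abs_nonneg a]
          · intro c hc
            rcases List.mem_append.mp hc with hc | hc
            · exact (hbd c hc).trans h.le
            · rw [List.mem_singleton.mp hc]

/-- For reals `s 0, …, s n`, zero belongs to the iterated tropical-real
hypersum `s 0 ⊞ ⋯ ⊞ s n` iff two terms of maximal absolute value are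
opposite (not necessarily at distinct indices). -/
theorem tropicalReal_hyperSum_zero_mem_iff (n : ℕ) (s : Fin (n + 1) → ℝ) :
    0 ∈ hyperSum trAdd (List.ofFn s) ↔
      ∃ j₁ j₂ : Fin (n + 1), s j₁ = -s j₂ ∧ ∀ j, |s j| ≤ |s j₁| := by
  have hne : List.ofFn s ≠ [] := by
    simp [List.ofFn_eq_nil_iff]
  have memiff : ∀ a : ℝ, a ∈ List.ofFn s ↔ ∃ i, s i = a := by
    intro a
    rw [List.mem_ofFn]
  rcases key_s10 (List.ofFn s) hne with ⟨a, ha, hna, hbd, hsum⟩ | ⟨hnopp, a, ha, hbd, hsum⟩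
  · obtain ⟨i₁, hi₁⟩ := (memiff _).mp ha
    obtain ⟨i₂, hi₂⟩ := (memiff _).mp hna
    constructor
    · intro _
      refine ⟨i₁, i₂, by rw [hi₁, hi₂, neg_neg], fun j => ?_⟩
      rw [hi₁]
      exact hbd _ ((memiff _).mpr ⟨j, rfl⟩)
    · intro _
      rw [hsum]
      simpa using abs_nonneg a
  · constructor
    · intro h0
      rw [hsum, Set.mem_singleton_iff] at h0
      exfalso
      apply hnopp
      refine ⟨a, ha, ?_, hbd⟩
      rw [← h0, neg_zero, h0]
      exact ha
    · rintro ⟨j₁, j₂, hj, hmax⟩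
      exfalso
      apply hnopp
      refine ⟨s j₁, (memiff _).mpr ⟨j₁, rfl⟩, ?_, ?_⟩
      · rw [show -s j₁ = s j₂ by rw [hj, neg_neg]]
        exact (memiff _).mpr ⟨j₂, rfl⟩
      · intro d hd
        obtain ⟨j, rfl⟩ := (memiff _).mp hd
        exact hmax j
end

section
/- Let s_1, …, s_k be real numbers and let a, b ∈ ℝ. If both a and b belong to the iterated tropical-real hypersum s_1 ⊞ ⋯ ⊞ s_k, then every element of a ⊞ b also belongs to s_1 ⊞ ⋯ ⊞ s_k. -/
def TRGood (S : Set ℝ) : Prop :=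
  (∃ c, S = {c}) ∨ (∃ M, 0 ≤ M ∧ S = {z | |z| ≤ M})

lemma mem_trAdd_abs_le {z x y : ℝ} (h : z ∈ trAdd x y) : |z| ≤ max |x| |y| := by
  unfold trAdd at h
  split_ifs at h with h1 h2 h3 <;> simp_all [Set.mem_singleton_iff]

lemma trGood_trAdd (x y : ℝ) : TRGood (trAdd x y) := by
  unfold trAdd
  split_ifs with h1 h2 h3
  · exact Or.inl ⟨x, rfl⟩
  · exact Or.inl ⟨y, rfl⟩
  · exact Or.inl ⟨x, rfl⟩
  · exact Or.inr ⟨|x|, abs_nonneg x, rfl⟩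

lemma trGood_step (a : ℝ) (S : Set ℝ) (h : TRGood S) :
    TRGood (⋃ x ∈ S, trAdd x a) := by
  rcases h with ⟨c, rfl⟩ | ⟨M, hM, rfl⟩
  · have : (⋃ x ∈ ({c} : Set ℝ), trAdd x a) = trAdd c a := by simp
    rw [this]; exact trGood_trAdd c a
  · by_cases hMa : |a| ≤ M
    · right
      refine ⟨M, hM, ?_⟩
      ext z
      simp only [Set.mem_iUnion, Set.mem_setOf_eq, exists_prop]
      constructor
      · rintro ⟨x, hx, hz⟩
        exact le_trans (mem_trAdd_abs_le hz) (max_le hx hMa)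
      · intro hz
        by_cases hza : |a| < |z|
        · refine ⟨z, hz, ?_⟩
          simp [trAdd, hza]
        · push_neg at hza
          by_cases ha0 : a = 0
          · subst ha0
            have hz0 : z = 0 := abs_nonpos_iff.mp (by simpa using hza)
            refine ⟨0, by simpa using hM, ?_⟩
            simp [trAdd, hz0]
          · refine ⟨-a, by simpa using hMa, ?_⟩
            have hne : ¬(-a = a) := fun h => ha0 (by linarith)
            simp [trAdd, hne, hza]
    · left
      push_neg at hMa
      refine ⟨a, ?_⟩
      ext z
      simp only [Set.mem_iUnion, Set.mem_singleton_iff, exists_prop]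
      constructor
      · rintro ⟨x, hx, hz⟩
        have hxa : |x| < |a| := lt_of_le_of_lt hx hMa
        have : trAdd x a = {a} := by
          unfold trAdd; rw [if_neg (not_lt.mpr hxa.le), if_pos hxa]
        rw [this] at hz; exact hz
      · rintro rfl
        refine ⟨0, by simpa using hM, ?_⟩
        have h0 : |(0:ℝ)| < |z| := by simpa using lt_of_le_of_lt hM hMa
        have : trAdd 0 z = {z} := by
          unfold trAdd; rw [if_neg (not_lt.mpr h0.le), if_pos h0]
        rw [this]; exact rfl

lemma trGood_hyperSum (l : List ℝ) : TRGood (hyperSum trAdd l) := by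
  unfold hyperSum
  suffices h : ∀ (l : List ℝ) (S : Set ℝ), TRGood S →
      TRGood (l.foldl (fun S a => ⋃ x ∈ S, trAdd x a) S) by
    exact h l {0} (Or.inl ⟨0, rfl⟩)
  intro l
  induction l with
  | nil => intro S hS; exact hS
  | cons a t ih => intro S hS; exact ih _ (trGood_step a S hS)

/-- If `a` and `b` both belong to the iterated tropical-real hypersum
`s 0 ⊞ ⋯ ⊞ s (k-1)`, then so does every element of `a ⊞ b`. -/
theorem tropicalReal_hyperSum_closed (k : ℕ) (s : Fin k → ℝ) (a b : ℝ)
    (ha : a ∈ hyperSum trAdd (List.ofFn s))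
    (hb : b ∈ hyperSum trAdd (List.ofFn s)) :
    trAdd a b ⊆ hyperSum trAdd (List.ofFn s) := by
  rcases trGood_hyperSum (List.ofFn s) with ⟨c, hc⟩ | ⟨M, hM, hMs⟩
  · rw [hc] at ha hb ⊢
    rcases ha with rfl; rcases hb with rfl
    intro z hz
    simpa [trAdd] using hz
  · rw [hMs] at ha hb ⊢
    intro z hz
    exact le_trans (mem_trAdd_abs_le hz) (max_le ha hb)
end

section
/- Let E be a finite set and let X, Y, Z : E → ℝ≥0 be functions to the nonnegative reals. If 0 belongs to the iterated triangle hypersum of the family (X(e)·Z(e))_{e∈E} and 0 belongs to the iterated triangle hypersum of the family (Y(e)·Z(e))_{e∈E}, then 0 belongs to the iterated triangle hypersum of the family (max(X(e), Y(e))·Z(e))_{e∈E}. -/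
private lemma maxlem (lo hi a T Mt : ℝ) (hT : 0 ≤ T) :
    max 0 (max (max 0 (max (lo - a) (a - hi)) - T) (2 * Mt - T - (hi + a)))
      = max 0 (max (lo - (a + T)) (2 * max a Mt - (a + T) - hi)) := by
  simp only [max_def]
  split_ifs <;> linarith

private lemma triUnion (lo hi a : ℝ) (h0 : 0 ≤ lo) (hlh : lo ≤ hi) (ha : 0 ≤ a) :
    (⋃ x ∈ Set.Icc lo hi, triAdd x a)
      = Set.Icc (max 0 (max (lo - a) (a - hi))) (hi + a) := by
  ext z
  simp only [triAdd, Set.mem_iUnion, Set.mem_Icc, Set.mem_setOf_eq, max_le_iff]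
  constructor
  · rintro ⟨x, ⟨hx1, hx2⟩, habs, hz⟩
    rw [abs_sub_le_iff] at habs
    exact ⟨⟨by linarith [habs.1, habs.2], by linarith [habs.1], by linarith [habs.2]⟩,
      by linarith⟩
  · rintro ⟨⟨hz0, h1, h2⟩, h3⟩
    rcases le_total a z with hle | hle
    · refine ⟨max lo (z - a), ⟨le_max_left _ _, max_le hlh (by linarith)⟩,
        abs_le.mpr ⟨?_, ?_⟩, ?_⟩ <;>
        rcases max_cases lo (z - a) with ⟨hm, hm2⟩ | ⟨hm, hm2⟩ <;> rw [hm] <;> linarith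
    · refine ⟨max lo (a - z), ⟨le_max_left _ _, max_le hlh (by linarith)⟩,
        abs_le.mpr ⟨?_, ?_⟩, ?_⟩ <;>
        rcases max_cases lo (a - z) with ⟨hm, hm2⟩ | ⟨hm, hm2⟩ <;> rw [hm] <;> linarith

private lemma fold_Icc : ∀ (l : List ℝ), (∀ a ∈ l, 0 ≤ a) → ∀ lo hi : ℝ, 0 ≤ lo → lo ≤ hi →
    List.foldl (fun S a => ⋃ x ∈ S, triAdd x a) (Set.Icc lo hi) l
      = Set.Icc (max 0 (max (lo - l.sum) (2 * l.foldr max 0 - l.sum - hi))) (hi + l.sum)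
  | [], _, lo, hi, h0, hlh => by
      have e1 : max 0 (max (lo - (0:ℝ)) (2 * 0 - 0 - hi)) = lo := by
        simp only [max_def]; split_ifs <;> linarith
      simp only [List.foldl_nil, List.sum_nil, List.foldr_nil, e1, add_zero]
  | a :: t, hnn, lo, hi, h0, hlh => by
      have ha : 0 ≤ a := hnn a (by simp)
      have hT : 0 ≤ t.sum := List.sum_nonneg fun x hx => hnn x (by simp [hx])
      rw [List.foldl_cons, triUnion lo hi a h0 hlh ha,
        fold_Icc t (fun x hx => hnn x (by simp [hx])) _ _ (le_max_left _ _)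
          (by
            apply max_le (by linarith)
            apply max_le <;> linarith),
        List.sum_cons, List.foldr_cons, maxlem lo hi a t.sum _ hT, add_assoc]

private lemma le_foldr_max : ∀ (l : List ℝ) (b x : ℝ), x ∈ l → x ≤ l.foldr max b
  | a :: t, b, x, hx => by
      rcases List.mem_cons.mp hx with rfl | hx
      · exact le_max_left _ _
      · exact le_max_of_le_right (le_foldr_max t b x hx)

private lemma foldr_max_le (l : List ℝ) (c : ℝ) (hc : 0 ≤ c) (h : ∀ a ∈ l, a ≤ c) :
    l.foldr max 0 ≤ c := by
  induction l with
  | nil => simpa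
  | cons a t ih =>
      exact max_le (h a (by simp)) (ih fun x hx => h x (by simp [hx]))

private lemma zero_mem_hyperSum_iff (l : List ℝ) (hnn : ∀ a ∈ l, 0 ≤ a) :
    0 ∈ hyperSum triAdd l ↔ ∀ a ∈ l, 2 * a ≤ l.sum := by
  have hS : 0 ≤ l.sum := List.sum_nonneg hnn
  rw [hyperSum, show ({0} : Set ℝ) = Set.Icc 0 0 from (Set.Icc_self 0).symm,
    fold_Icc l hnn 0 0 le_rfl le_rfl, Set.mem_Icc]
  constructor
  · rintro ⟨h1, -⟩ a ha
    have h2 : 2 * l.foldr max 0 - l.sum - 0 ≤ 0 :=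
      le_trans (le_trans (le_max_right _ _) (le_max_right _ _)) h1
    have := le_foldr_max l 0 a ha
    linarith
  · intro h
    have hm : l.foldr max 0 ≤ l.sum / 2 :=
      foldr_max_le l _ (by linarith) fun a ha => by linarith [h a ha]
    exact ⟨max_le le_rfl (max_le (by linarith) (by linarith)), by linarith⟩

/-- Triangle-hyperfield case of the max-composition proposition: if `X` and `Y`
(vectors of nonnegative reals indexed by a finite set `E`) are both orthogonal
to `Z`, i.e. `0` lies in the iterated triangle hypersums of the families
`(X e * Z e)` and `(Y e * Z e)`, then the coordinatewise maximum `X ∘ Y` is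
also orthogonal to `Z`. -/
theorem triangle_max_composition {E : Type*} [Fintype E] (X Y Z : E → ℝ)
    (hX : ∀ e, 0 ≤ X e) (hY : ∀ e, 0 ≤ Y e) (hZ : ∀ e, 0 ≤ Z e)
    (hXZ : 0 ∈ hyperSum triAdd ((Finset.univ : Finset E).toList.map fun e => X e * Z e))
    (hYZ : 0 ∈ hyperSum triAdd ((Finset.univ : Finset E).toList.map fun e => Y e * Z e)) :
    0 ∈ hyperSum triAdd
      ((Finset.univ : Finset E).toList.map fun e => max (X e) (Y e) * Z e) := by
  set l := (Finset.univ : Finset E).toList with hl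
  have nnX : ∀ a ∈ l.map fun e => X e * Z e, 0 ≤ a := by
    rintro a ha; rw [List.mem_map] at ha; obtain ⟨e, -, rfl⟩ := ha
    exact mul_nonneg (hX e) (hZ e)
  have nnY : ∀ a ∈ l.map fun e => Y e * Z e, 0 ≤ a := by
    rintro a ha; rw [List.mem_map] at ha; obtain ⟨e, -, rfl⟩ := ha
    exact mul_nonneg (hY e) (hZ e)
  have nnM : ∀ a ∈ l.map fun e => max (X e) (Y e) * Z e, 0 ≤ a := by
    rintro a ha; rw [List.mem_map] at ha; obtain ⟨e, -, rfl⟩ := ha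
    exact mul_nonneg (le_max_of_le_left (hX e)) (hZ e)
  rw [zero_mem_hyperSum_iff _ nnX] at hXZ
  rw [zero_mem_hyperSum_iff _ nnY] at hYZ
  rw [zero_mem_hyperSum_iff _ nnM]
  rintro a ha
  rw [List.mem_map] at ha
  obtain ⟨e, he, rfl⟩ := ha
  have hsumX : (l.map fun e => X e * Z e).sum ≤ (l.map fun e => max (X e) (Y e) * Z e).sum :=
    List.sum_le_sum fun e _ => mul_le_mul_of_nonneg_right (le_max_left _ _) (hZ e)
  have hsumY : (l.map fun e => Y e * Z e).sum ≤ (l.map fun e => max (X e) (Y e) * Z e).sum :=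
    List.sum_le_sum fun e _ => mul_le_mul_of_nonneg_right (le_max_right _ _) (hZ e)
  rcases le_total (Y e) (X e) with h | h
  · rw [max_eq_left h]
    have := hXZ (X e * Z e) (List.mem_map.mpr ⟨e, he, rfl⟩)
    linarith
  · rw [max_eq_right h]
    have := hYZ (Y e * Z e) (List.mem_map.mpr ⟨e, he, rfl⟩)
    linarith
end

section
/- Let E be a finite set and let X, Y, Z : E → ℝ. Define (X ∘ Y)(e) = X(e) if |X(e)| ≥ |Y(e)| and (X ∘ Y)(e) = Y(e) otherwise. If 0 belongs to the iterated tropical-real hypersum of the family (X(e)·Z(e))_{e∈E} and 0 belongs to the iterated tropical-real hypersum of the family (Y(e)·Z(e))_{e∈E}, then 0 belongs to the iterated tropical-real hypersum of the family ((X ∘ Y)(e)·Z(e))_{e∈E}. -/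
namespace TR

/-- Max of absolute values of a list (0 for empty). -/
def Mval (l : List ℝ) : ℝ := l.foldr (fun a m => max |a| m) 0

@[simp] lemma Mval_nil : Mval [] = 0 := rfl

@[simp] lemma Mval_cons (a : ℝ) (l : List ℝ) : Mval (a :: l) = max |a| (Mval l) := rfl

lemma Mval_nonneg (l : List ℝ) : 0 ≤ Mval l := by
  induction l with
  | nil => simp
  | cons a l ih => simpa using Or.inr ih

lemma Mval_append (l : List ℝ) (a : ℝ) : Mval (l ++ [a]) = max (Mval l) |a| := by
  induction l with
  | nil => simp [abs_nonneg]
  | cons x l ih => simp [ih, max_assoc]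

lemma le_Mval {a : ℝ} {l : List ℝ} (h : a ∈ l) : |a| ≤ Mval l := by
  induction l with
  | nil => simp at h
  | cons x l ih =>
    rcases List.mem_cons.1 h with h | h
    · simp [h]
    · exact le_trans (ih h) (by simp)

lemma trAdd_subcases {x a z : ℝ} (h : z ∈ trAdd x a) :
    (z = x ∧ |a| ≤ |x|) ∨ (z = a ∧ |x| ≤ |a|) ∨ (x = -a ∧ |x| = |a| ∧ |z| ≤ |x|) := by
  unfold trAdd at h
  split_ifs at h with h1 h2 h3
  · exact Or.inl ⟨h, le_of_lt h1⟩
  · exact Or.inr (Or.inl ⟨h, le_of_lt h2⟩)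
  · exact Or.inl ⟨h, by rw [h3]⟩
  · have hxa : |x| = |a| := le_antisymm (not_lt.1 h1) (not_lt.1 h2)
    rcases abs_eq_abs.1 hxa with h4 | h4
    · exact absurd h4 h3
    · exact Or.inr (Or.inr ⟨h4, hxa, h⟩)

lemma mem_trAdd_left {x a : ℝ} (h : |a| ≤ |x|) : x ∈ trAdd x a := by
  unfold trAdd
  split_ifs with h1 h2 h3
  · rfl
  · exact absurd h (not_le.2 h2)
  · rfl
  · exact Set.mem_setOf.2 le_rfl

lemma mem_trAdd_right {x a : ℝ} (h : |x| ≤ |a|) : a ∈ trAdd x a := by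
  unfold trAdd
  split_ifs with h1 h2 h3
  · exact absurd h (not_le.2 h1)
  · rfl
  · exact h3.symm
  · exact le_of_eq (le_antisymm (not_lt.1 h1) (not_lt.1 h2)).symm

lemma mem_trAdd_neg_left {a z : ℝ} (h : |z| ≤ |a|) : z ∈ trAdd (-a) a := by
  unfold trAdd
  split_ifs with h1 h2 h3
  · simp at h1
  · simp at h2
  · have ha : a = 0 := by linarith
    subst ha
    have hz : z = 0 := abs_nonpos_iff.1 (by simpa using h)
    simp [hz]
  · simpa using h

lemma mem_trAdd_pos_left {a z : ℝ} (h : |z| ≤ |a|) : z ∈ trAdd a (-a) := by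
  unfold trAdd
  split_ifs with h1 h2 h3
  · simp at h1
  · simp at h2
  · have ha : a = 0 := by linarith
    subst ha
    have hz : z = 0 := abs_nonpos_iff.1 (by simpa using h)
    simp [hz]
  · exact h

lemma zero_mem_trAdd_iff {x a : ℝ} : 0 ∈ trAdd x a ↔ x = -a := by
  constructor
  · intro h
    unfold trAdd at h
    split_ifs at h with h1 h2 h3
    · exfalso
      rw [Set.mem_singleton_iff] at h
      rw [← h, abs_zero] at h1
      linarith [abs_nonneg a]
    · exfalso
      rw [Set.mem_singleton_iff] at h
      rw [← h, abs_zero] at h2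
      linarith [abs_nonneg x]
    · rw [Set.mem_singleton_iff] at h
      rw [← h] at h3 ⊢
      rw [← h3]
      norm_num
    · have hxa : |x| = |a| := le_antisymm (not_lt.1 h1) (not_lt.1 h2)
      rcases abs_eq_abs.1 hxa with h4 | h4
      · exact absurd h4 h3
      · exact h4
  · intro h
    subst h
    exact mem_trAdd_neg_left (by simp)

lemma hyperSum_nil : hyperSum trAdd [] = {0} := rfl

lemma hyperSum_append (l : List ℝ) (a : ℝ) :
    hyperSum trAdd (l ++ [a]) = ⋃ x ∈ hyperSum trAdd l, trAdd x a := by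
  simp [hyperSum, List.foldl_append]

lemma hyperSum_nonempty (l : List ℝ) : (hyperSum trAdd l).Nonempty := by
  induction l using List.reverseRecOn with
  | nil => exact ⟨0, rfl⟩
  | append_singleton l a ih =>
    obtain ⟨y, hy⟩ := ih
    rw [hyperSum_append]
    rcases le_total |y| |a| with h | h
    · exact ⟨a, Set.mem_biUnion hy (mem_trAdd_right h)⟩
    · exact ⟨y, Set.mem_biUnion hy (mem_trAdd_left h)⟩

lemma abs_le_Mval_of_mem {z : ℝ} {l : List ℝ} (h : z ∈ hyperSum trAdd l) : |z| ≤ Mval l := by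
  induction l using List.reverseRecOn generalizing z with
  | nil => simp [hyperSum_nil] at h; simp [h]
  | append_singleton l a ih =>
    rw [hyperSum_append] at h
    obtain ⟨y, hy, hz⟩ := Set.mem_iUnion₂.1 h
    rw [Mval_append]
    rcases trAdd_subcases hz with ⟨rfl, _⟩ | ⟨rfl, _⟩ | ⟨_, _, hle⟩
    · exact le_trans (ih hy) (le_max_left _ _)
    · exact le_max_right _ _
    · exact le_trans (le_trans hle (ih hy)) (le_max_left _ _)

/-- Lemma F: an element of the list of maximal modulus is in the hypersum. -/
lemma mem_hyperSum_of_max {v : ℝ} {l : List ℝ} (hv : v ∈ l) (hM : |v| = Mval l) :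
    v ∈ hyperSum trAdd l := by
  induction l using List.reverseRecOn with
  | nil => simp at hv
  | append_singleton l a ih =>
    rw [hyperSum_append]
    rw [Mval_append] at hM
    rcases List.mem_append.1 hv with hv | hv
    · have h1 : |v| ≤ Mval l := le_Mval hv
      have h2 : Mval l ≤ |v| := le_trans (le_max_left _ _) hM.ge
      have h3 : |a| ≤ |v| := le_trans (le_max_right _ _) hM.ge
      exact Set.mem_biUnion (ih hv (le_antisymm h1 h2)) (mem_trAdd_left h3)
    · have hva : v = a := by simpa using hv
      subst hva
      obtain ⟨y, hy⟩ := hyperSum_nonempty l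
      have : |y| ≤ |v| := le_trans (abs_le_Mval_of_mem hy) (le_trans (le_max_left _ _) hM.ge)
      exact Set.mem_biUnion hy (mem_trAdd_right this)

/-- Lemma E: if both ±M are in the list, the hypersum contains the whole ball. -/
lemma ball_subset_hyperSum {l : List ℝ} (hp : Mval l ∈ l) (hn : -Mval l ∈ l) :
    {z : ℝ | |z| ≤ Mval l} ⊆ hyperSum trAdd l := by
  induction l using List.reverseRecOn with
  | nil => simp at hp
  | append_singleton l a ih =>
    intro z hz
    simp only [Set.mem_setOf_eq] at hz
    by_cases hM0 : Mval (l ++ [a]) = 0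
    · have hz0 : z = 0 := abs_nonpos_iff.1 (le_trans hz hM0.le)
      have h0 : (0:ℝ) ∈ l ++ [a] := hM0 ▸ hp
      have := mem_hyperSum_of_max h0 (by rw [abs_zero, hM0])
      rwa [hz0]
    have hMnn : 0 ≤ Mval (l ++ [a]) := Mval_nonneg _
    have hMpos : 0 < Mval (l ++ [a]) := lt_of_le_of_ne hMnn (Ne.symm hM0)
    have hMapp : Mval (l ++ [a]) = max (Mval l) |a| := Mval_append l a
    have hMl_le : Mval l ≤ Mval (l ++ [a]) := hMapp ▸ le_max_left _ _
    have haM : |a| ≤ Mval (l ++ [a]) := hMapp ▸ le_max_right _ _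
    rw [hyperSum_append]
    rcases List.mem_append.1 hp with hp' | hp' <;> rcases List.mem_append.1 hn with hn' | hn'
    · -- both in l
      have h1 : Mval l = Mval (l ++ [a]) :=
        le_antisymm hMl_le (le_trans (le_of_eq (abs_of_nonneg hMpos.le).symm) (le_Mval hp'))
      rcases lt_or_ge |a| |z| with h | h
      · have hzS : z ∈ hyperSum trAdd l :=
          ih (h1 ▸ hp') (h1 ▸ hn') (by simp only [Set.mem_setOf_eq]; rw [h1]; exact hz)
        exact Set.mem_biUnion hzS (mem_trAdd_left h.le)
      · have hnaS : -a ∈ hyperSum trAdd l :=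
          ih (h1 ▸ hp') (h1 ▸ hn') (by simp only [Set.mem_setOf_eq, abs_neg]; rw [h1]; exact haM)
        exact Set.mem_biUnion hnaS (mem_trAdd_neg_left h)
    · -- M ∈ l, -M = a
      have ha : a = -Mval (l ++ [a]) := by
        have := List.mem_singleton.1 hn'; linarith
      have h1 : Mval l = Mval (l ++ [a]) := by
        refine le_antisymm hMl_le ?_
        calc Mval (l ++ [a]) = |Mval (l ++ [a])| := (abs_of_nonneg hMpos.le).symm
          _ ≤ Mval l := le_Mval hp'
      have hMS : Mval (l ++ [a]) ∈ hyperSum trAdd l :=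
        mem_hyperSum_of_max hp' (by rw [abs_of_nonneg hMpos.le, h1])
      have hMS' : -a ∈ hyperSum trAdd l := by
        have hna : -a = Mval (l ++ [a]) := by linarith
        rw [hna]; exact hMS
      have hz' : z ∈ trAdd (-a) a :=
        mem_trAdd_neg_left (by rw [ha, abs_neg, abs_of_nonneg hMpos.le]; exact hz)
      exact Set.mem_biUnion hMS' hz'
    · -- M = a, -M ∈ l
      have ha : a = Mval (l ++ [a]) := (List.mem_singleton.1 hp').symm
      have h1 : Mval l = Mval (l ++ [a]) := by
        refine le_antisymm hMl_le ?_
        calc Mval (l ++ [a]) = |-Mval (l ++ [a])| := by rw [abs_neg, abs_of_nonneg hMpos.le]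
          _ ≤ Mval l := le_Mval hn'
      have hMS : -Mval (l ++ [a]) ∈ hyperSum trAdd l :=
        mem_hyperSum_of_max hn' (by rw [abs_neg, abs_of_nonneg hMpos.le, h1])
      have hMS' : -a ∈ hyperSum trAdd l := by
        rw [congrArg Neg.neg ha]; exact hMS
      have hz' : z ∈ trAdd (-a) a :=
        mem_trAdd_neg_left (by rw [ha, abs_of_nonneg hMpos.le]; exact hz)
      exact Set.mem_biUnion hMS' hz'
    · -- M = a and -M = a : impossible
      exfalso
      have h1 : a = Mval (l ++ [a]) := (List.mem_singleton.1 hp').symm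
      have h2 : -Mval (l ++ [a]) = a := List.mem_singleton.1 hn'
      linarith

/-- Lemma C: an element of the hypersum of maximal (positive) modulus is in the list. -/
lemma mem_list_of_mem_hyperSum {z : ℝ} {l : List ℝ} (h : z ∈ hyperSum trAdd l)
    (hz : |z| = Mval l) (hpos : 0 < Mval l) : z ∈ l := by
  induction l using List.reverseRecOn generalizing z with
  | nil => simp at hpos
  | append_singleton l a ih =>
    rw [hyperSum_append] at h
    rw [Mval_append] at hz hpos
    obtain ⟨y, hy, hmem⟩ := Set.mem_iUnion₂.1 h
    rcases trAdd_subcases hmem with ⟨rfl, hle⟩ | ⟨rfl, _⟩ | ⟨hya, habs, hle⟩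
    · -- z = y
      have h1 : |z| ≤ Mval l := abs_le_Mval_of_mem hy
      have h2 : max (Mval l) |a| ≤ |z| := hz.ge
      have h3 : |z| = Mval l := le_antisymm h1 (le_trans (le_max_left _ _) h2)
      have h4 : 0 < Mval l := lt_of_lt_of_le hpos (le_trans h2 h3.le)
      exact List.mem_append.2 (Or.inl (ih hy h3 h4))
    · exact List.mem_append.2 (Or.inr (by simp))
    · -- y = -a, |z| ≤ |y|
      have h1 : |y| ≤ Mval l := abs_le_Mval_of_mem hy
      have h3 : |a| ≤ |z| := by rw [hz]; exact le_max_right _ _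
      have h4 : |z| = |a| := le_antisymm (le_trans hle habs.le) h3
      rcases abs_eq_abs.1 h4 with h5 | h5
      · exact List.mem_append.2 (Or.inr (by simp [h5]))
      · have hzy : z = y := by rw [h5, hya]
        have h6 : |y| = Mval l := by
          refine le_antisymm h1 ?_
          have h7 := le_max_left (Mval l) |a|
          rw [← hz, hzy] at h7
          exact h7
        have h8 : |z| = Mval l := by rw [hzy, h6]
        have h9 : 0 < Mval l := by linarith
        exact List.mem_append.2
          (Or.inl (ih (by rw [hzy]; exact hy) (by rw [hzy]; exact h6) h9))

/-- Lemma B': structure of elements of the hypersum. -/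
lemma hyperSum_structure {z : ℝ} {l : List ℝ} (h : z ∈ hyperSum trAdd l) :
    |z| = Mval l ∨ (Mval l ∈ l ∧ -Mval l ∈ l) := by
  induction l using List.reverseRecOn generalizing z with
  | nil =>
    left
    have : z = 0 := h
    simp [this]
  | append_singleton l a ih =>
    rw [hyperSum_append] at h
    rw [Mval_append]
    obtain ⟨y, hy, hmem⟩ := Set.mem_iUnion₂.1 h
    have hyM : |y| ≤ Mval l := abs_le_Mval_of_mem hy
    rcases trAdd_subcases hmem with ⟨rfl, hle⟩ | ⟨hza, hle⟩ | ⟨hya, habs, hle⟩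
    · -- z = y, |a| ≤ |y|
      have hmax : max (Mval l) |a| = Mval l := max_eq_left (le_trans hle hyM)
      rcases ih hy with h1 | ⟨h1, h2⟩
      · left; rw [hmax]; exact h1
      · right
        rw [hmax]
        exact ⟨List.mem_append.2 (Or.inl h1), List.mem_append.2 (Or.inl h2)⟩
    · -- z = a
      subst hza
      rcases le_or_gt (Mval l) |z| with h1 | h1
      · left; exact (max_eq_right h1).symm
      · rcases ih hy with h2 | ⟨h2, h3⟩
        · exact absurd (h2 ▸ hle) (not_le.2 h1)
        · right
          rw [max_eq_left h1.le]
          exact ⟨List.mem_append.2 (Or.inl h2), List.mem_append.2 (Or.inl h3)⟩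
    · -- y = -a, |y| = |a|, |z| ≤ |y|
      rcases ih hy with h1 | ⟨h1, h2⟩
      · -- |y| = Mval l
        have hmax : max (Mval l) |a| = |a| := max_eq_right (by rw [← h1, habs])
        rcases eq_or_lt_of_le (abs_nonneg a) with h0 | h0
        · left
          rw [hmax, ← h0]
          have : |z| ≤ 0 := le_trans hle (habs.le.trans h0.symm.le)
          exact le_antisymm this (abs_nonneg z)
        · -- 0 < |a|
          have hposl : 0 < Mval l := by rw [← h1, habs]; exact h0
          have hyl : y ∈ l := mem_list_of_mem_hyperSum hy h1 hposl
          right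
          rw [hmax]
          rcases le_or_gt 0 a with hs | hs
          · refine ⟨List.mem_append.2 (Or.inr (by simp [abs_of_nonneg hs])), ?_⟩
            have hne : -|a| = y := by rw [abs_of_nonneg hs]; exact hya.symm
            rw [hne]; exact List.mem_append.2 (Or.inl hyl)
          · refine ⟨?_, List.mem_append.2 (Or.inr (by simp [abs_of_neg hs]))⟩
            have hne : |a| = y := by rw [abs_of_neg hs]; exact hya.symm
            rw [hne]; exact List.mem_append.2 (Or.inl hyl)
      · -- Mval l ∈ l and -Mval l ∈ l
        have hmax : max (Mval l) |a| = Mval l := max_eq_left (by rw [← habs]; exact hyM)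
        right
        rw [hmax]
        exact ⟨List.mem_append.2 (Or.inl h1), List.mem_append.2 (Or.inl h2)⟩

lemma zero_mem_of_Mval_eq_zero {l : List ℝ} (h : Mval l = 0) : (0:ℝ) ∈ hyperSum trAdd l := by
  induction l using List.reverseRecOn with
  | nil => exact rfl
  | append_singleton l a ih =>
    rw [Mval_append] at h
    have h1 : Mval l = 0 :=
      le_antisymm (le_trans (le_max_left _ _) h.le) (Mval_nonneg l)
    have h2 : a = 0 := by
      have : |a| ≤ 0 := le_trans (le_max_right _ _) h.le
      exact abs_nonpos_iff.1 this
    rw [hyperSum_append]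
    refine Set.mem_biUnion (ih h1) ?_
    rw [h2, zero_mem_trAdd_iff]; ring

/-- Main characterization: 0 is in the hypersum iff all entries are 0 or both ±M occur. -/
lemma zero_mem_hyperSum_iff {l : List ℝ} :
    (0:ℝ) ∈ hyperSum trAdd l ↔ Mval l = 0 ∨ (Mval l ∈ l ∧ -Mval l ∈ l) := by
  constructor
  · intro h
    rcases hyperSum_structure h with h1 | h1
    · left; simpa using h1.symm
    · right; exact h1
  · rintro (h | ⟨h1, h2⟩)
    · exact zero_mem_of_Mval_eq_zero h
    · exact ball_subset_hyperSum h1 h2 (by simp [Mval_nonneg])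



lemma Mval_map_eq_max {E : Type*} (L : List E) (f g h : E → ℝ)
    (hf : ∀ e ∈ L, |f e| = max |g e| |h e|) :
    Mval (L.map f) = max (Mval (L.map g)) (Mval (L.map h)) := by
  induction L with
  | nil => simp [Mval]
  | cons x L ih =>
    simp only [List.map_cons, Mval_cons]
    rw [hf x (by simp), ih (fun e he => hf e (List.mem_cons_of_mem _ he))]
    exact max_max_max_comm _ _ _ _

end TR

/-- Tropical-real case of the max-composition proposition: if `X` and `Y` are
both orthogonal to `Z` (i.e. `0` is in the iterated tropical-real hypersums of
`(X e * Z e)` and `(Y e * Z e)`), then so is the composition `X ∘ Y`, where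
`(X ∘ Y)(e) = X e` if `|X e| ≥ |Y e|` and `(X ∘ Y)(e) = Y e` otherwise. -/
theorem tropicalReal_max_composition {E : Type*} [Fintype E] (X Y Z : E → ℝ)
    (hXZ : 0 ∈ hyperSum trAdd ((Finset.univ : Finset E).toList.map fun e => X e * Z e))
    (hYZ : 0 ∈ hyperSum trAdd ((Finset.univ : Finset E).toList.map fun e => Y e * Z e)) :
    0 ∈ hyperSum trAdd ((Finset.univ : Finset E).toList.map fun e =>
      (if |Y e| ≤ |X e| then X e else Y e) * Z e) := by
  classical
  set L := (Finset.univ : Finset E).toList with hL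
  set W : E → ℝ := fun e => (if |Y e| ≤ |X e| then X e else Y e) with hW
  rw [TR.zero_mem_hyperSum_iff] at hXZ hYZ ⊢
  set lX := L.map (fun e => X e * Z e) with hlX
  set lY := L.map (fun e => Y e * Z e) with hlY
  set lW := L.map (fun e => W e * Z e) with hlW
  have key : ∀ e ∈ L, |W e * Z e| = max |X e * Z e| |Y e * Z e| := by
    intro e _
    rw [abs_mul, abs_mul, abs_mul, ← max_mul_of_nonneg _ _ (abs_nonneg (Z e))]
    congr 1
    show |if |Y e| ≤ |X e| then X e else Y e| = max |X e| |Y e|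
    split_ifs with h
    · exact (max_eq_left h).symm
    · exact (max_eq_right (not_le.1 h).le).symm
  have hMW : TR.Mval lW = max (TR.Mval lX) (TR.Mval lY) :=
    TR.Mval_map_eq_max L _ _ _ key
  by_cases hW0 : TR.Mval lW = 0
  · exact Or.inl hW0
  have hWpos : 0 < TR.Mval lW := lt_of_le_of_ne (TR.Mval_nonneg _) (Ne.symm hW0)
  right
  rcases le_total (TR.Mval lY) (TR.Mval lX) with hle | hle
  · -- X dominant
    have hMWX : TR.Mval lW = TR.Mval lX := by rw [hMW]; exact max_eq_left hle
    have hXpos : 0 < TR.Mval lX := hMWX ▸ hWpos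
    have hX0 : TR.Mval lX ≠ 0 := ne_of_gt hXpos
    have hwit : ∀ c : ℝ, |c| = TR.Mval lX → c ∈ lX → c ∈ lW := by
      intro c hc hcl
      obtain ⟨e, heL, heq⟩ := List.mem_map.1 hcl
      have hZ : Z e ≠ 0 := by
        intro h0
        rw [h0, mul_zero] at heq
        rw [← heq, abs_zero] at hc
        exact hX0 hc.symm
      have hY : |Y e * Z e| ≤ TR.Mval lY :=
        TR.le_Mval (List.mem_map_of_mem (f := fun e => Y e * Z e) heL)
      have hXe : |Y e * Z e| ≤ |X e * Z e| := by
        rw [heq, hc]; exact le_trans hY hle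
      have hcond : |Y e| ≤ |X e| := by
        rw [abs_mul, abs_mul] at hXe
        exact le_of_mul_le_mul_right hXe (abs_pos.2 hZ)
      refine List.mem_map.2 ⟨e, heL, ?_⟩
      show (if |Y e| ≤ |X e| then X e else Y e) * Z e = c
      rw [if_pos hcond]
      exact heq
    rcases hXZ with h | ⟨h1, h2⟩
    · exact absurd h hX0
    constructor
    · rw [hMWX]
      exact hwit _ (abs_of_nonneg hXpos.le) h1
    · rw [hMWX]
      refine hwit _ ?_ h2
      rw [abs_neg, abs_of_nonneg hXpos.le]
  · -- consider whether Y strictly dominates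
    rcases lt_or_eq_of_le hle with hlt | heqM
    · -- Y strictly dominant
      have hMWY : TR.Mval lW = TR.Mval lY := by rw [hMW]; exact max_eq_right hle
      have hYpos : 0 < TR.Mval lY := hMWY ▸ hWpos
      have hY0 : TR.Mval lY ≠ 0 := ne_of_gt hYpos
      have hwit : ∀ c : ℝ, |c| = TR.Mval lY → c ∈ lY → c ∈ lW := by
        intro c hc hcl
        obtain ⟨e, heL, heq⟩ := List.mem_map.1 hcl
        have hZ : Z e ≠ 0 := by
          intro h0
          rw [h0, mul_zero] at heq
          rw [← heq, abs_zero] at hc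
          exact hY0 hc.symm
        have hX : |X e * Z e| ≤ TR.Mval lX :=
          TR.le_Mval (List.mem_map_of_mem (f := fun e => X e * Z e) heL)
        have hXe : |X e * Z e| < |Y e * Z e| := by
          rw [heq, hc]; exact lt_of_le_of_lt hX hlt
        have hcond : ¬ (|Y e| ≤ |X e|) := by
          rw [abs_mul, abs_mul] at hXe
          intro hc
          exact absurd hXe (not_lt.2 (mul_le_mul_of_nonneg_right hc (abs_nonneg _)))
        refine List.mem_map.2 ⟨e, heL, ?_⟩
        show (if |Y e| ≤ |X e| then X e else Y e) * Z e = c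
        rw [if_neg hcond]
        exact heq
      rcases hYZ with h | ⟨h1, h2⟩
      · exact absurd h hY0
      constructor
      · rw [hMWY]
        exact hwit _ (abs_of_nonneg hYpos.le) h1
      · rw [hMWY]
        refine hwit _ ?_ h2
        rw [abs_neg, abs_of_nonneg hYpos.le]
    · -- equal maxima: X-dominant argument applies
      have hle' : TR.Mval lY ≤ TR.Mval lX := le_of_eq heqM.symm
      have hMWX : TR.Mval lW = TR.Mval lX := by rw [hMW]; exact max_eq_left hle'
      have hXpos : 0 < TR.Mval lX := hMWX ▸ hWpos
      have hX0 : TR.Mval lX ≠ 0 := ne_of_gt hXpos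
      have hwit : ∀ c : ℝ, |c| = TR.Mval lX → c ∈ lX → c ∈ lW := by
        intro c hc hcl
        obtain ⟨e, heL, heq⟩ := List.mem_map.1 hcl
        have hZ : Z e ≠ 0 := by
          intro h0
          rw [h0, mul_zero] at heq
          rw [← heq, abs_zero] at hc
          exact hX0 hc.symm
        have hY : |Y e * Z e| ≤ TR.Mval lY :=
          TR.le_Mval (List.mem_map_of_mem (f := fun e => Y e * Z e) heL)
        have hXe : |Y e * Z e| ≤ |X e * Z e| := by
          rw [heq, hc]; exact le_trans hY hle'
        have hcond : |Y e| ≤ |X e| := by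
          rw [abs_mul, abs_mul] at hXe
          exact le_of_mul_le_mul_right hXe (abs_pos.2 hZ)
        refine List.mem_map.2 ⟨e, heL, ?_⟩
        show (if |Y e| ≤ |X e| then X e else Y e) * Z e = c
        rw [if_pos hcond]
        exact heq
      rcases hXZ with h | ⟨h1, h2⟩
      · exact absurd h hX0
      constructor
      · rw [hMWX]
        exact hwit _ (abs_of_nonneg hXpos.le) h1
      · rw [hMWX]
        refine hwit _ ?_ h2
        rw [abs_neg, abs_of_nonneg hXpos.le]
end

section
/- Let E be a finite set and X, Y, Z : E → ℝ. Suppose 0 belongs to the iterated tropical-real hypersum of (X(e)·Z(e))_{e∈E} and 0 belongs to the iterated tropical-real hypersum of (Y(e)·Z(e))_{e∈E}. Then there exists ε > 0 such that for all η with 0 < η < ε, the vector X_η defined by X_η(e) = X(e) if X(e) ≠ 0 and X_η(e) = η·Y(e) if X(e) = 0 satisfies: 0 belongs to the iterated tropical-real hypersum of (X_η(e)·Z(e))_{e∈E}. -/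
/-- max of absolute values of a list (0 for empty). -/
def msup (l : List ℝ) : ℝ := l.foldr (fun a m => max |a| m) 0

lemma msup_nil : msup [] = 0 := rfl

lemma msup_cons (a : ℝ) (l : List ℝ) : msup (a :: l) = max |a| (msup l) := rfl

lemma msup_nonneg (l : List ℝ) : 0 ≤ msup l := by
  induction l with
  | nil => simp [msup_nil]
  | cons a l ih => rw [msup_cons]; exact le_trans ih (le_max_right _ _)

lemma le_msup {a : ℝ} {l : List ℝ} (h : a ∈ l) : |a| ≤ msup l := by
  induction l with
  | nil => simp at h
  | cons b l ih =>
    rw [msup_cons]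
    rcases List.mem_cons.mp h with h | h
    · subst h; exact le_max_left _ _
    · exact le_trans (ih h) (le_max_right _ _)

lemma msup_le {l : List ℝ} {c : ℝ} (hc : 0 ≤ c) (h : ∀ a ∈ l, |a| ≤ c) : msup l ≤ c := by
  induction l with
  | nil => simpa [msup_nil] using hc
  | cons a l ih =>
    rw [msup_cons]
    exact max_le (h a (by simp)) (ih fun b hb => h b (by simp [hb]))

lemma msup_append (l : List ℝ) (a : ℝ) : msup (l ++ [a]) = max (msup l) |a| := by
  induction l with
  | nil => simp [msup_nil, msup_cons, max_comm]
  | cons b l ih =>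
    simp only [List.cons_append, msup_cons, ih, max_assoc]

lemma msup_attained {l : List ℝ} : msup l = 0 ∨ ∃ a ∈ l, |a| = msup l := by
  induction l with
  | nil => exact Or.inl rfl
  | cons b l ih =>
    rw [msup_cons]
    rcases max_choice |b| (msup l) with h | h
    · exact Or.inr ⟨b, by simp, h.symm⟩
    · rw [h]
      rcases ih with h0 | ⟨a, ha, hae⟩
      · exact Or.inl h0
      · exact Or.inr ⟨a, by simp [ha], hae⟩

/-! trAdd computation lemmas -/

lemma trAdd_eq_left {x y : ℝ} (h : |y| < |x|) : trAdd x y = {x} := by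
  simp [trAdd, h, not_lt.mpr h.le]

lemma trAdd_eq_right {x y : ℝ} (h : |x| < |y|) : trAdd x y = {y} := by
  simp [trAdd, h, not_lt.mpr h.le, asymm h]

lemma trAdd_self (x : ℝ) : trAdd x x = {x} := by
  simp [trAdd]

lemma trAdd_neg {x : ℝ} (h : x ≠ 0) : trAdd x (-x) = {z | |z| ≤ |x|} := by
  have hne : x ≠ -x := by
    intro he; apply h; linarith [he]
  simp [trAdd, abs_neg, hne]

lemma trAdd_subset (x y : ℝ) : trAdd x y ⊆ {z | |z| ≤ max |x| |y|} := by
  intro z hz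
  show |z| ≤ max |x| |y|
  unfold trAdd at hz
  split_ifs at hz with h1 h2 h3
  · simp only [Set.mem_singleton_iff] at hz; subst hz; exact le_max_left _ _
  · simp only [Set.mem_singleton_iff] at hz; subst hz; exact le_max_right _ _
  · simp only [Set.mem_singleton_iff] at hz; subst hz; exact le_max_left _ _
  · exact le_trans hz (le_max_left _ _)

lemma hyperSum_nil (add : ℝ → ℝ → Set ℝ) : hyperSum add [] = {0} := rfl

lemma hyperSum_append (add : ℝ → ℝ → Set ℝ) (l : List ℝ) (a : ℝ) :
    hyperSum add (l ++ [a]) = ⋃ x ∈ hyperSum add l, add x a := by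
  simp [hyperSum, List.foldl_append]

lemma biUnion_ball {M a : ℝ} (hM : 0 ≤ M) (ha : |a| ≤ M) :
    ⋃ x ∈ {z : ℝ | |z| ≤ M}, trAdd x a = {z : ℝ | |z| ≤ M} := by
  ext z
  simp only [Set.mem_iUnion, Set.mem_setOf_eq, exists_prop]
  constructor
  · rintro ⟨x, hx, hz⟩
    have := trAdd_subset x a hz
    simp only [Set.mem_setOf_eq] at this
    exact le_trans this (max_le hx ha)
  · intro hz
    rcases lt_or_ge |a| |z| with h | h
    · exact ⟨z, hz, by rw [trAdd_eq_left h]; rfl⟩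
    · rcases eq_or_ne a 0 with rfl | ha0
      · refine ⟨0, by simpa using hM, ?_⟩
        rw [trAdd_self]
        simp only [abs_zero] at h
        have : z = 0 := abs_nonpos_iff.mp h
        simp [this]
      · refine ⟨-a, by simpa using ha, ?_⟩
        have : trAdd (-a) a = {w : ℝ | |w| ≤ |a|} := by
          have := trAdd_neg (x := -a) (by simpa using ha0)
          simpa using this
        rw [this]; exact h

lemma biUnion_big {M a : ℝ} {S : Set ℝ} (hS : S.Nonempty) (hbd : ∀ x ∈ S, |x| ≤ M)
    (h : M < |a|) : ⋃ x ∈ S, trAdd x a = {a} := by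
  ext z
  simp only [Set.mem_iUnion, exists_prop]
  constructor
  · rintro ⟨x, hx, hz⟩
    rwa [trAdd_eq_right (lt_of_le_of_lt (hbd x hx) h)] at hz
  · rintro rfl
    obtain ⟨x, hx⟩ := hS
    exact ⟨x, hx, by rw [trAdd_eq_right (lt_of_le_of_lt (hbd x hx) h)]; rfl⟩

lemma conclude_big {l : List ℝ} {a : ℝ} (h : msup l < |a|) :
    (max (msup l) |a| = 0 ∧ ({a} : Set ℝ) = {0}) ∨
    (0 < max (msup l) |a| ∧
      ((max (msup l) |a| ∈ l ++ [a] ∧ -max (msup l) |a| ∈ l ++ [a] ∧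
          ({a} : Set ℝ) = {z | |z| ≤ max (msup l) |a|}) ∨
       (max (msup l) |a| ∈ l ++ [a] ∧ -max (msup l) |a| ∉ l ++ [a] ∧
          ({a} : Set ℝ) = {max (msup l) |a|}) ∨
       (max (msup l) |a| ∉ l ++ [a] ∧ -max (msup l) |a| ∈ l ++ [a] ∧
          ({a} : Set ℝ) = {-max (msup l) |a|}))) := by
  have h0 : 0 ≤ msup l := msup_nonneg l
  have habs : 0 < |a| := lt_of_le_of_lt h0 h
  have hmax : max (msup l) |a| = |a| := max_eq_right h.le
  have ha0 : a ≠ 0 := abs_pos.mp habs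
  have hnotmem : ∀ x : ℝ, |x| = |a| → x ∉ l := by
    intro x hx hxl
    have := le_msup hxl
    rw [hx] at this
    linarith
  rw [hmax]
  refine Or.inr ⟨habs, ?_⟩
  rcases ha0.lt_or_gt with hneg | hpos
  · -- a < 0
    have habs_eq : |a| = -a := abs_of_neg hneg
    refine Or.inr (Or.inr ⟨?_, ?_, ?_⟩)
    · intro hm
      rcases List.mem_append.mp hm with hm | hm
      · exact hnotmem _ (abs_abs a) hm
      · simp only [List.mem_singleton] at hm
        rw [← hm, habs_eq] at hneg
        linarith [abs_nonneg a]
    · rw [habs_eq, neg_neg]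
      exact List.mem_append_right _ (by simp)
    · rw [habs_eq, neg_neg]
  · -- 0 < a
    have habs_eq : |a| = a := abs_of_pos hpos
    refine Or.inr (Or.inl ⟨?_, ?_, ?_⟩)
    · rw [habs_eq]
      exact List.mem_append_right _ (by simp)
    · intro hm
      rcases List.mem_append.mp hm with hm | hm
      · exact hnotmem _ (by rw [abs_neg, abs_abs]) hm
      · simp only [List.mem_singleton] at hm
        rw [habs_eq] at hm
        linarith
    · rw [habs_eq]

theorem hyperSum_char (l : List ℝ) :
    (msup l = 0 ∧ hyperSum trAdd l = {0}) ∨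
    (0 < msup l ∧
      ((msup l ∈ l ∧ -msup l ∈ l ∧ hyperSum trAdd l = {z | |z| ≤ msup l}) ∨
       (msup l ∈ l ∧ -msup l ∉ l ∧ hyperSum trAdd l = {msup l}) ∨
       (msup l ∉ l ∧ -msup l ∈ l ∧ hyperSum trAdd l = {-msup l}))) := by
  induction l using List.reverseRecOn with
  | nil => exact Or.inl ⟨rfl, rfl⟩
  | append_singleton l a ih =>
    rw [hyperSum_append, msup_append]
    rcases ih with ⟨hM0, hS⟩ | ⟨hMpos, hcase⟩
    · -- msup l = 0, hyperSum = {0}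
      rw [hS, Set.biUnion_singleton]
      rcases eq_or_ne a 0 with rfl | ha0
      · left
        rw [trAdd_self]
        simp [hM0]
      · have habs : 0 < |a| := abs_pos.mpr ha0
        have h : msup l < |a| := by rw [hM0]; exact habs
        rw [trAdd_eq_right (by simpa using habs)]
        exact conclude_big h
    · have hMne : msup l ≠ 0 := ne_of_gt hMpos
      have habsM : |msup l| = msup l := abs_of_pos hMpos
      have habsM' : |(-msup l)| = msup l := by rw [abs_neg, habsM]
      rcases hcase with ⟨hp, hn, hS⟩ | ⟨hp, hn, hS⟩ | ⟨hp, hn, hS⟩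
      · -- ball case
        rw [hS]
        rcases le_or_gt |a| (msup l) with ha | ha
        · rw [biUnion_ball (msup_nonneg l) ha, max_eq_left ha]
          exact Or.inr ⟨hMpos, Or.inl ⟨List.mem_append_left _ hp,
            List.mem_append_left _ hn, rfl⟩⟩
        · rw [biUnion_big (S := {z : ℝ | |z| ≤ msup l})
            ⟨0, show |(0:ℝ)| ≤ msup l by simpa using msup_nonneg l⟩ (fun x hx => hx) ha]
          exact conclude_big ha
      · -- {msup l} case
        rw [hS, Set.biUnion_singleton]
        rcases lt_trichotomy |a| (msup l) with ha | ha | ha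
        · rw [trAdd_eq_left (by rw [habsM]; exact ha), max_eq_left ha.le]
          refine Or.inr ⟨hMpos, Or.inr (Or.inl ⟨List.mem_append_left _ hp, ?_, rfl⟩)⟩
          intro hm
          rcases List.mem_append.mp hm with hm | hm
          · exact hn hm
          · simp only [List.mem_singleton] at hm
            rw [← hm, habsM'] at ha
            exact lt_irrefl _ ha
        · rcases (abs_eq hMpos.le).mp ha with rfl | rfl
          · rw [trAdd_self, habsM, max_self]
            refine Or.inr ⟨hMpos, Or.inr (Or.inl ⟨List.mem_append_left _ hp, ?_, rfl⟩)⟩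
            intro hm
            rcases List.mem_append.mp hm with hm | hm
            · exact hn hm
            · simp only [List.mem_singleton] at hm
              linarith
          · rw [trAdd_neg hMne, habsM, habsM', max_self]
            exact Or.inr ⟨hMpos, Or.inl ⟨List.mem_append_left _ hp,
              List.mem_append_right _ (by simp), rfl⟩⟩
        · rw [trAdd_eq_right (by rw [habsM]; exact ha)]
          exact conclude_big ha
      · -- {-msup l} case
        rw [hS, Set.biUnion_singleton]
        rcases lt_trichotomy |a| (msup l) with ha | ha | ha
        · rw [trAdd_eq_left (by rw [habsM']; exact ha), max_eq_left ha.le]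
          refine Or.inr ⟨hMpos, Or.inr (Or.inr ⟨?_, List.mem_append_left _ hn, rfl⟩)⟩
          intro hm
          rcases List.mem_append.mp hm with hm | hm
          · exact hp hm
          · simp only [List.mem_singleton] at hm
            rw [← hm, habsM] at ha
            exact lt_irrefl _ ha
        · rcases (abs_eq hMpos.le).mp ha with rfl | rfl
          · have htr := trAdd_neg (x := -msup l) (neg_ne_zero.mpr hMne)
            rw [neg_neg] at htr
            rw [htr, habsM, habsM', max_self]
            exact Or.inr ⟨hMpos, Or.inl ⟨List.mem_append_right _ (by simp),
              List.mem_append_left _ hn, rfl⟩⟩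
          · rw [trAdd_self, habsM', max_self]
            refine Or.inr ⟨hMpos, Or.inr (Or.inr ⟨?_, List.mem_append_left _ hn, rfl⟩)⟩
            intro hm
            rcases List.mem_append.mp hm with hm | hm
            · exact hp hm
            · simp only [List.mem_singleton] at hm
              linarith
        · rw [trAdd_eq_right (by rw [habsM']; exact ha)]
          exact conclude_big ha

lemma zero_mem_hyperSum_iff_s16 (l : List ℝ) :
    0 ∈ hyperSum trAdd l ↔ msup l = 0 ∨ (msup l ∈ l ∧ -msup l ∈ l) := by
  rcases hyperSum_char l with ⟨hM0, hS⟩ | ⟨hMpos, hcase⟩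
  · simp [hS, hM0]
  · rcases hcase with ⟨hp, hn, hS⟩ | ⟨hp, hn, hS⟩ | ⟨hp, hn, hS⟩
    · simp only [hS, Set.mem_setOf_eq, abs_zero]
      exact ⟨fun _ => Or.inr ⟨hp, hn⟩, fun _ => hMpos.le⟩
    · rw [hS]
      simp only [Set.mem_singleton_iff]
      constructor
      · intro h; exact absurd h.symm (ne_of_gt hMpos)
      · rintro (h | ⟨_, h⟩)
        · exact absurd h (ne_of_gt hMpos)
        · exact absurd h hn
    · rw [hS]
      simp only [Set.mem_singleton_iff]
      constructor
      · intro h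
        exact absurd (neg_eq_zero.mp h.symm) (ne_of_gt hMpos)
      · rintro (h | ⟨h, _⟩)
        · exact absurd h (ne_of_gt hMpos)
        · exact absurd h hp

/-- Single-circuit tropical-real case of ε-composition: if `X` and `Y` are both
orthogonal to `Z`, then for all sufficiently small `η > 0` the vector `X_η`,
equal to `X e` where `X e ≠ 0` and to `η * Y e` where `X e = 0`, is orthogonal
to `Z`. -/
theorem tropicalReal_eps_composition {E : Type*} [Fintype E] (X Y Z : E → ℝ)
    (hXZ : 0 ∈ hyperSum trAdd ((Finset.univ : Finset E).toList.map fun e => X e * Z e))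
    (hYZ : 0 ∈ hyperSum trAdd ((Finset.univ : Finset E).toList.map fun e => Y e * Z e)) :
    ∃ ε : ℝ, 0 < ε ∧ ∀ η : ℝ, 0 < η → η < ε →
      0 ∈ hyperSum trAdd ((Finset.univ : Finset E).toList.map fun e =>
        (if X e ≠ 0 then X e else η * Y e) * Z e) := by
  classical
  rw [zero_mem_hyperSum_iff_s16] at hXZ hYZ
  set lX := ((Finset.univ : Finset E).toList.map fun e => X e * Z e) with hlX
  set lY := ((Finset.univ : Finset E).toList.map fun e => Y e * Z e) with hlY
  set M := msup lX with hM
  set B := msup lY with hB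
  have hB0 : 0 ≤ B := msup_nonneg lY
  have hmemY : ∀ e : E, Y e * Z e ∈ lY := fun e => List.mem_map.mpr ⟨e, by simp, rfl⟩
  have hmemX : ∀ e : E, X e * Z e ∈ lX := fun e => List.mem_map.mpr ⟨e, by simp, rfl⟩
  rcases (msup_nonneg lX).eq_or_lt with hM0 | hMpos
  · -- M = 0 : the perturbed list is η • (Y·Z)
    refine ⟨1, one_pos, fun η hη _ => ?_⟩
    have hzero : ∀ e : E, X e * Z e = 0 := by
      intro e
      have h := le_msup (hmemX e)
      rw [← hM0] at h
      exact abs_nonpos_iff.mp h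
    have hfun : (fun e => (if X e ≠ 0 then X e else η * Y e) * Z e)
        = fun e => η * (Y e * Z e) := by
      funext e
      by_cases hX : X e = 0
      · simp [hX, mul_assoc]
      · have hZ : Z e = 0 := by
          rcases mul_eq_zero.mp (hzero e) with h | h
          · exact absurd h hX
          · exact h
        simp [hX, hZ]
    rw [hfun, zero_mem_hyperSum_iff_s16]
    set l' := ((Finset.univ : Finset E).toList.map fun e => η * (Y e * Z e)) with hl'
    have hmem' : ∀ e : E, η * (Y e * Z e) ∈ l' := fun e => List.mem_map.mpr ⟨e, by simp, rfl⟩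
    rcases hYZ with hB0' | ⟨hBp, hBn⟩
    · -- all Y·Z entries are 0
      left
      refine le_antisymm (msup_le le_rfl ?_) (msup_nonneg l')
      intro b hb
      obtain ⟨e, _, he⟩ := List.mem_map.mp hb
      have h := le_msup (hmemY e)
      rw [← hB, hB0'] at h
      have : Y e * Z e = 0 := abs_nonpos_iff.mp h
      rw [← he, this, mul_zero, abs_zero]
    · -- ±B attained in lY, so ±ηB attained in l'
      obtain ⟨e₁, _, he₁⟩ := List.mem_map.mp hBp
      obtain ⟨e₂, _, he₂⟩ := List.mem_map.mp hBn
      have hmem₁ : η * B ∈ l' := by rw [← he₁]; exact hmem' e₁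
      have hmem₂ : -(η * B) ∈ l' := by
        have : η * (Y e₂ * Z e₂) = -(η * B) := by rw [he₂]; ring
        rw [← this]; exact hmem' e₂
      have hsup : msup l' = η * B := by
        refine le_antisymm (msup_le (by positivity) ?_) ?_
        · intro b hb
          obtain ⟨e, _, he⟩ := List.mem_map.mp hb
          rw [← he, abs_mul, abs_of_pos hη]
          exact mul_le_mul_of_nonneg_left (le_msup (hmemY e)) hη.le
        · have := le_msup hmem₁
          rwa [abs_mul, abs_of_pos hη, abs_of_nonneg hB0] at this
      right
      rw [hsup]
      exact ⟨hmem₁, hmem₂⟩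
  · -- M > 0
    have hMne : M ≠ 0 := ne_of_gt hMpos
    rcases hXZ with hM0' | ⟨hMp, hMn⟩
    · exact absurd hM0' hMne
    refine ⟨M / (B + 1), div_pos hMpos (by linarith), fun η hη hηε => ?_⟩
    have hηB : η * B < M := by
      have h1 : η * (B + 1) < M := (lt_div_iff₀ (by linarith)).mp hηε
      nlinarith
    rw [zero_mem_hyperSum_iff_s16]
    set l' := ((Finset.univ : Finset E).toList.map fun e =>
      (if X e ≠ 0 then X e else η * Y e) * Z e) with hl'
    obtain ⟨e₁, _, he₁⟩ := List.mem_map.mp hMp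
    obtain ⟨e₂, _, he₂⟩ := List.mem_map.mp hMn
    have hX₁ : X e₁ ≠ 0 := by
      intro h; rw [h, zero_mul] at he₁; exact hMne he₁.symm
    have hX₂ : X e₂ ≠ 0 := by
      intro h; rw [h, zero_mul] at he₂
      apply hMne; linarith [he₂]
    have hmem₁ : M ∈ l' := by
      refine List.mem_map.mpr ⟨e₁, by simp, ?_⟩
      rw [if_pos hX₁]; exact he₁
    have hmem₂ : -M ∈ l' := by
      refine List.mem_map.mpr ⟨e₂, by simp, ?_⟩
      rw [if_pos hX₂]; exact he₂
    have hsup : msup l' = M := by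
      refine le_antisymm (msup_le hMpos.le ?_) ?_
      · intro b hb
        obtain ⟨e, _, he⟩ := List.mem_map.mp hb
        by_cases hX : X e = 0
        · rw [← he, if_neg (by simpa using hX), mul_assoc, abs_mul, abs_of_pos hη]
          calc η * |Y e * Z e| ≤ η * B :=
                mul_le_mul_of_nonneg_left (le_msup (hmemY e)) hη.le
            _ ≤ M := hηB.le
        · rw [← he, if_pos hX]
          exact le_msup (hmemX e)
      · have := le_msup hmem₁
        rwa [abs_of_pos hMpos] at this
    right
    rw [hsup]
    exact ⟨hmem₁, hmem₂⟩
end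

section
/- Let n ≥ 1 and let x_1, …, x_n be complex numbers with |x_j| = 1 for all j. Then there exist positive real numbers a_1, …, a_n with a_1·x_1 + ⋯ + a_n·x_n = 0 if and only if either (i) there exists a complex number w with |w| = 1 such that every x_j equals w or −w and both w and −w occur among the x_j, or (ii) there is no complex number w with |w| = 1 such that Re(x_j · conj(w)) ≥ 0 for all j. -/
open Complex

lemma unit_collinear {u v : ℂ} (hu : ‖u‖ = 1) (hv : ‖v‖ = 1)
    (h : ((starRingEnd ℂ) u * v).im = 0) : v = u ∨ v = -u := by
  set z := (starRingEnd ℂ) u * v with hz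
  have hzabs : ‖z‖ = 1 := by
    rw [hz, norm_mul, Complex.norm_conj, hu, hv, one_mul]
  have hzre : z = (z.re : ℂ) := by
    rw [Complex.ext_iff]; simp [h]
  have habs : |z.re| = 1 := by
    have := hzabs; rw [hzre] at this; rwa [Complex.norm_real, Real.norm_eq_abs] at this
  have huu : u * (starRingEnd ℂ) u = 1 := by
    rw [Complex.mul_conj, ← Complex.sq_norm, hu]; norm_num
  have hv' : v = u * z := by
    rw [hz, ← mul_assoc, huu, one_mul]
  rcases abs_eq (by norm_num : (0:ℝ) ≤ 1) |>.mp habs with h1 | h1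
  · left; rw [hv', hzre, h1]; simp
  · right; rw [hv', hzre, h1]; simp

lemma phase_sep (n : ℕ) (hn : 1 ≤ n) (x : Fin n → ℂ) (hx : ∀ j, ‖x j‖ = 1)
    (h : ¬∃ a : Fin n → ℝ, (∀ j, 0 < a j) ∧ ∑ j, (a j : ℂ) * x j = 0) :
    ∃ w : ℂ, ‖w‖ = 1 ∧ ∀ j, 0 ≤ (x j * (starRingEnd ℂ) w).re := by
  classical
  set i0 : Fin n := ⟨0, hn⟩ with hi0
  set u := x i0 with hu
  by_cases hcol : ∀ j, x j = u ∨ x j = -u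
  · refine ⟨I * u, by rw [norm_mul, Complex.norm_I, hx, one_mul], fun j => ?_⟩
    rcases hcol j with hj | hj <;> rw [hj] <;>
      simp [Complex.mul_re, Complex.mul_im] <;> ring_nf <;> exact le_rfl
  · push_neg at hcol
    obtain ⟨j1, hj1, hj1'⟩ := hcol
    set v := x j1 with hv
    have hne : j1 ≠ i0 := by
      intro hh; apply hj1; rw [hv, hh]
    have hd : ((starRingEnd ℂ) u * v).im ≠ 0 := by
      intro hh
      rcases unit_collinear (hx i0) (hx j1) hh with h1 | h1
      · exact hj1 h1
      · exact hj1' h1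
    set d : ℝ := u.re * v.im - u.im * v.re with hdd
    have hd' : d ≠ 0 := by
      have : ((starRingEnd ℂ) u * v).im = d := by
        simp [Complex.mul_im, hdd]; ring
      rwa [this] at hd
    -- the linear map
    set L : (Fin n → ℝ) →ₗ[ℝ] ℂ :=
      { toFun := fun a => ∑ j, (a j : ℂ) * x j
        map_add' := by
          intro a b; simp [add_mul, Finset.sum_add_distrib]
        map_smul' := by
          intro c a; simp [Finset.mul_sum, mul_assoc, Complex.real_smul] } with hL
    have hLc : Continuous L := L.continuous_of_finiteDimensional
    set Lc : (Fin n → ℝ) →L[ℝ] ℂ := ⟨L, hLc⟩ with hLcdef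
    have hLapp : ∀ a : Fin n → ℝ, Lc a = ∑ j, (a j : ℂ) * x j := fun a => rfl
    -- single basis vectors
    have hLe : ∀ j : Fin n, Lc (fun k => if k = j then 1 else 0) = x j := by
      intro j
      rw [hLapp]
      have : ∀ k, ((if k = j then (1:ℝ) else 0 : ℝ) : ℂ) * x k
          = if k = j then x k else 0 := by
        intro k; by_cases hk : k = j <;> simp [hk]
      rw [Finset.sum_congr rfl fun k _ => this k, Finset.sum_ite_eq']
      simp
    have hsurj : Function.Surjective Lc := by
      intro z
      set c0 : ℝ := (z.re * v.im - z.im * v.re) / d with hc0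
      set c1 : ℝ := (u.re * z.im - u.im * z.re) / d with hc1
      refine ⟨fun k => if k = i0 then c0 else if k = j1 then c1 else 0, ?_⟩
      rw [hLapp]
      have : ∀ k, ((if k = i0 then c0 else if k = j1 then c1 else 0 : ℝ) : ℂ) * x k
          = (if k = i0 then (c0:ℂ) * x k else 0) + (if k = j1 then (c1:ℂ) * x k else 0) := by
        intro k
        by_cases h0 : k = i0
        · simp [h0, hne, Ne.symm hne]
        · by_cases h1 : k = j1 <;> simp [h0, h1, hne]
      rw [Finset.sum_congr rfl fun k _ => this k, Finset.sum_add_distrib,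
        Finset.sum_ite_eq', Finset.sum_ite_eq']
      simp only [Finset.mem_univ, if_true, ← hu, ← hv]
      rw [Complex.ext_iff]
      constructor
      · simp only [Complex.add_re, Complex.mul_re, Complex.ofReal_re, Complex.ofReal_im]
        rw [hc0, hc1]; field_simp; ring
      · simp only [Complex.add_im, Complex.mul_im, Complex.ofReal_re, Complex.ofReal_im]
        rw [hc0, hc1]; field_simp; ring
    set U : Set (Fin n → ℝ) := Set.univ.pi (fun _ => Set.Ioi 0) with hU
    have hUmem : ∀ a : Fin n → ℝ, a ∈ U ↔ ∀ j, 0 < a j := by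
      intro a; simp [hU, Set.mem_pi]
    have hUopen : IsOpen U := isOpen_set_pi Set.finite_univ fun _ _ => isOpen_Ioi
    have hUconv : Convex ℝ U := convex_pi fun _ _ => convex_Ioi 0
    have hCopen : IsOpen (Lc '' U) := (Lc.isOpenMap hsurj) U hUopen
    have hCconv : Convex ℝ (Lc '' U) := hUconv.linear_image L
    have h0 : (0:ℂ) ∉ Lc '' U := by
      rintro ⟨a, ha, ha0⟩
      exact h ⟨a, (hUmem a).mp ha, by rw [← hLapp]; exact ha0⟩
    obtain ⟨f, hf⟩ := geometric_hahn_banach_open_point hCconv hCopen h0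
    have hf0 : ∀ c ∈ Lc '' U, f c < 0 := by
      intro c hc; have := hf c hc; rwa [map_zero] at this
    have hones : Lc (fun _ => 1) ∈ Lc '' U :=
      ⟨fun _ => 1, (hUmem _).mpr fun _ => one_pos, rfl⟩
    have hfs : f (Lc fun _ => 1) < 0 := hf0 _ hones
    have key : ∀ j, f (x j) ≤ 0 := by
      intro j
      have hε : ∀ ε : ℝ, 0 < ε → f (x j) + ε * f (Lc fun _ => 1) < 0 := by
        intro ε hε
        have hmem : (fun k => (if k = j then (1:ℝ) else 0) + ε) ∈ U := by
          rw [hUmem]; intro k; by_cases hk : k = j <;> simp [hk] <;> linarith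
        have hfc := hf0 _ ⟨_, hmem, rfl⟩
        have heq : ((fun k => (if k = j then (1:ℝ) else 0) + ε) : Fin n → ℝ)
            = (fun k => if k = j then (1:ℝ) else 0) + ε • ((fun _ => 1) : Fin n → ℝ) := by
          funext k; simp
        rw [heq, map_add, map_smul, map_add, map_smul, hLe] at hfc
        simpa using hfc
      by_contra hnot
      push_neg at hnot
      set t := f (x j) with ht
      set c := f (Lc fun _ => 1) with hc
      have h1 := hε (t / (-2 * c)) (by
        apply div_pos hnot; linarith)
      have hcne : c ≠ 0 := ne_of_lt hfs
      have h2 : t / (-2 * c) * c = -t / 2 := by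
        field_simp
      rw [h2] at h1; linarith
    set w0 : ℂ := ((f 1 : ℝ) : ℂ) + ((f Complex.I : ℝ) : ℂ) * Complex.I with hw0
    have hw0re : w0.re = f 1 := by simp [hw0]
    have hw0im : w0.im = f Complex.I := by simp [hw0]
    have hfz : ∀ z : ℂ, f z = z.re * f 1 + z.im * f Complex.I := by
      intro z
      conv_lhs => rw [← Complex.re_add_im z]
      have : ((z.re : ℝ) : ℂ) + ((z.im : ℝ) : ℂ) * Complex.I
          = z.re • (1:ℂ) + z.im • Complex.I := by
        simp [Complex.real_smul]
      rw [this, map_add, map_smul, map_smul, smul_eq_mul, smul_eq_mul]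
    have hw0ne : w0 ≠ 0 := by
      intro hh
      have h1 : f 1 = 0 := by rw [← hw0re, hh]; simp
      have h2 : f Complex.I = 0 := by rw [← hw0im, hh]; simp
      have : f (Lc fun _ => 1) = 0 := by rw [hfz, h1, h2]; ring
      linarith
    set r : ℝ := ‖w0‖ with hr
    have hrpos : 0 < r := by
      rw [hr]; exact norm_pos_iff.mpr hw0ne
    refine ⟨-w0 / (r : ℂ), ?_, fun j => ?_⟩
    · rw [norm_div, norm_neg, Complex.norm_real, Real.norm_eq_abs, ← hr,
        abs_of_pos hrpos, div_self (ne_of_gt hrpos)]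
    · have hconj : (starRingEnd ℂ) (-w0 / (r:ℂ)) = -((starRingEnd ℂ) w0) / (r:ℂ) := by
        rw [map_div₀, map_neg, Complex.conj_ofReal]
      rw [hconj]
      have : x j * (-((starRingEnd ℂ) w0) / (r:ℂ)) = -(x j * (starRingEnd ℂ) w0) / (r:ℂ) := by
        ring
      rw [this, Complex.div_ofReal_re]
      apply div_nonneg _ (le_of_lt hrpos)
      rw [Complex.neg_re, neg_nonneg]
      have : (x j * (starRingEnd ℂ) w0).re = f (x j) := by
        rw [Complex.mul_re, Complex.conj_re, Complex.conj_im, hw0re, hw0im, hfz (x j)]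
        ring
      rw [this]; exact key j


open Complex in
/-- (Phase diagrams for the phase hyperfield `ℙ`.) For unit complex numbers
`x 0, …, x (n-1)` with `n ≥ 1`, there are positive reals `a j` with
`∑ j, a j * x j = 0` iff either the `x j` consist of exactly two antipodal
values, both occurring, or the `x j` do not all lie in a common closed
half-circle. -/
theorem phase_orthogonality_iff (n : ℕ) (hn : 1 ≤ n) (x : Fin n → ℂ)
    (hx : ∀ j, ‖x j‖ = 1) :
    (∃ a : Fin n → ℝ, (∀ j, 0 < a j) ∧ ∑ j, (a j : ℂ) * x j = 0) ↔
      ((∃ w : ℂ, ‖w‖ = 1 ∧ (∀ j, x j = w ∨ x j = -w) ∧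
          (∃ j, x j = w) ∧ (∃ j, x j = -w)) ∨
        ¬∃ w : ℂ, ‖w‖ = 1 ∧ ∀ j, 0 ≤ (x j * (starRingEnd ℂ) w).re) := by
  classical
  have hnonempty : Nonempty (Fin n) := ⟨⟨0, hn⟩⟩
  constructor
  · rintro ⟨a, hapos, hsum⟩
    by_cases hw : ∃ w : ℂ, ‖w‖ = 1 ∧ ∀ j, 0 ≤ (x j * (starRingEnd ℂ) w).re
    · left
      obtain ⟨w, hw1, hw2⟩ := hw
      have hre : ∀ j ∈ Finset.univ, (0:ℝ) ≤ a j * (x j * (starRingEnd ℂ) w).re := fun j _ =>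
        mul_nonneg (le_of_lt (hapos j)) (hw2 j)
      have hsum0 : ∑ j, a j * (x j * (starRingEnd ℂ) w).re = 0 := by
        have h1 : ((∑ j, (a j : ℂ) * x j) * (starRingEnd ℂ) w).re = 0 := by rw [hsum]; simp
        rw [Finset.sum_mul] at h1
        rw [← h1, Complex.re_sum]
        refine Finset.sum_congr rfl fun j _ => ?_
        rw [mul_assoc, Complex.re_ofReal_mul]
      have hzero := (Finset.sum_eq_zero_iff_of_nonneg hre).mp hsum0
      have hre0 : ∀ j, (x j * (starRingEnd ℂ) w).re = 0 := by
        intro j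
        rcases mul_eq_zero.mp (hzero j (Finset.mem_univ j)) with h | h
        · exact absurd h (ne_of_gt (hapos j))
        · exact h
      set v : ℂ := Complex.I * w with hvdef
      have hvabs : ‖v‖ = 1 := by rw [hvdef, norm_mul, Complex.norm_I, hw1, one_mul]
      have hxv : ∀ j, x j = v ∨ x j = -v := by
        intro j
        apply unit_collinear hvabs (hx j)
        have h2 : (starRingEnd ℂ) v * x j = -Complex.I * ((starRingEnd ℂ) w * x j) := by
          rw [hvdef, map_mul, Complex.conj_I]; ring
        rw [h2]
        have h3 : (-Complex.I * ((starRingEnd ℂ) w * x j)).im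
            = -(x j * (starRingEnd ℂ) w).re := by
          simp [Complex.mul_im, Complex.mul_re]; ring
        rw [h3, hre0 j, neg_zero]
      have hvne : v ≠ 0 := by
        intro hh; rw [hh] at hvabs; simp at hvabs
      have hsa : (0:ℝ) < ∑ j, a j :=
        Finset.sum_pos (fun j _ => hapos j) Finset.univ_nonempty
      have hsane : ((∑ j, a j : ℝ) : ℂ) ≠ 0 := by
        exact_mod_cast ne_of_gt hsa
      refine ⟨v, hvabs, hxv, ?_, ?_⟩
      · by_contra hno
        push_neg at hno
        have hall : ∀ j, x j = -v := fun j => (hxv j).resolve_left (hno j)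
        have : (0:ℂ) = ((∑ j, a j : ℝ) : ℂ) * (-v) := by
          rw [← hsum]
          push_cast
          rw [Finset.sum_mul]
          exact Finset.sum_congr rfl fun j _ => by rw [hall j]
        rcases mul_eq_zero.mp this.symm with h | h
        · exact hsane h
        · exact hvne (neg_eq_zero.mp h)
      · by_contra hno
        push_neg at hno
        have hall : ∀ j, x j = v := fun j => (hxv j).resolve_right (hno j)
        have : (0:ℂ) = ((∑ j, a j : ℝ) : ℂ) * v := by
          rw [← hsum]
          push_cast
          rw [Finset.sum_mul]
          exact Finset.sum_congr rfl fun j _ => by rw [hall j]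
        rcases mul_eq_zero.mp this.symm with h | h
        · exact hsane h
        · exact hvne h
    · exact Or.inr hw
  · rintro (⟨w, hw1, hall, ⟨jp, hjp⟩, ⟨jm, hjm⟩⟩ | hno)
    · have hwne : w ≠ 0 := by
        intro hh; rw [hh] at hw1; simp at hw1
      set P : Finset (Fin n) := Finset.univ.filter (fun j => x j = w) with hP
      have hmemP : ∀ j, j ∈ P ↔ x j = w := by
        intro j; simp [hP]
      have hmemPc : ∀ j, j ∈ Pᶜ → x j = -w := by
        intro j hj
        rcases hall j with h | h
        · exfalso
          rw [Finset.mem_compl, hmemP] at hj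
          exact hj h
        · exact h
      have hjpP : jp ∈ P := (hmemP jp).mpr hjp
      have hjmPc : jm ∈ Pᶜ := by
        rw [Finset.mem_compl, hmemP, hjm]
        intro hh
        apply hwne
        have : -w - w = 0 := by rw [hh]; ring
        have h2 : (-2 : ℂ) * w = 0 := by rw [← this]; ring
        rcases mul_eq_zero.mp h2 with h | h
        · norm_num at h
        · exact h
      have hPpos : 0 < P.card := Finset.card_pos.mpr ⟨jp, hjpP⟩
      have hPcpos : 0 < Pᶜ.card := Finset.card_pos.mpr ⟨jm, hjmPc⟩
      have hPne : (P.card : ℝ) ≠ 0 := by exact_mod_cast ne_of_gt hPpos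
      have hPcne : ((Pᶜ.card : ℕ) : ℝ) ≠ 0 := by exact_mod_cast ne_of_gt hPcpos
      have hPneC : ((P.card : ℕ) : ℂ) ≠ 0 := by exact_mod_cast hPne
      have hPcneC : ((Pᶜ.card : ℕ) : ℂ) ≠ 0 := by exact_mod_cast hPcne
      refine ⟨fun j => if j ∈ P then 1 / P.card else 1 / Pᶜ.card, ?_, ?_⟩
      · intro j
        by_cases hj : j ∈ P
        · simp only [if_pos hj]
          exact div_pos one_pos (by exact_mod_cast hPpos)
        · simp only [if_neg hj]
          exact div_pos one_pos (by exact_mod_cast hPcpos)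
      · rw [← Finset.sum_add_sum_compl P]
        have h1 : ∑ j ∈ P, ((if j ∈ P then 1 / (P.card:ℝ) else 1 / Pᶜ.card : ℝ) : ℂ) * x j
            = w := by
          have : ∀ j ∈ P, ((if j ∈ P then 1 / (P.card:ℝ) else 1 / Pᶜ.card : ℝ) : ℂ) * x j
              = (1 / (P.card:ℝ) : ℝ) * w := by
            intro j hj
            rw [if_pos hj, (hmemP j).mp hj]
          rw [Finset.sum_congr rfl this, Finset.sum_const, nsmul_eq_mul]
          push_cast
          field_simp
        have h2 : ∑ j ∈ Pᶜ, ((if j ∈ P then 1 / (P.card:ℝ) else 1 / Pᶜ.card : ℝ) : ℂ) * x j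
            = -w := by
          have : ∀ j ∈ Pᶜ, ((if j ∈ P then 1 / (P.card:ℝ) else 1 / Pᶜ.card : ℝ) : ℂ) * x j
              = (1 / (Pᶜ.card:ℝ) : ℝ) * (-w) := by
            intro j hj
            rw [if_neg (Finset.mem_compl.mp hj), hmemPc j hj]
          rw [Finset.sum_congr rfl this, Finset.sum_const, nsmul_eq_mul]
          push_cast
          field_simp
        rw [h1, h2]
        ring
    · by_contra hA
      exact hno (phase_sep n hn x hx hA)
end
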